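/- arXiv:2406.03623 — 2 statements merged into one kernel-verified Lean document; each statement's English description precedes it below -/
import Mathlib

section
/- Let λ be a frequency and fix 1 ≤ p < ∞. Suppose there exists a constant C ≥ 1 such that for every finite set A ⊆ ℕ, all complex coefficients (a_n)_{n∈A} and all unimodular (w_n)_{n∈A}: ‖∑_{n∈A} w_n a_n e^{-λ_n s}‖_{H_p^λ} ≤ C·‖∑_{n∈A} a_n e^{-λ_n s}‖_{H_p^λ}. Then there exist constants c', C' > 0 such that for every finite set A ⊆ ℕ and all complex (a_n)_{n∈A}: c'·(∑_{n∈A} |a_n|²)^{1/2} ≤ ‖∑_{n∈A} a_n e^{-λ_n s}‖_{H_p^λ} ≤ C'·(∑_{n∈A} |a_n|²)^{1/2}. (That is, if the canonical basis {e^{-λ_n s}} is unconditional in H_p^λ, then the H_p^λ-norm of Dirichlet polynomials is equivalent to the H_2^λ-norm.) -/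
open MeasureTheory Filter Finset

/-- `M_{p,R}((a_n)_{n∈A}) = ((1/(2R)) ∫_{-R}^{R} |∑_{n∈A} a_n e^{-iλ_n t}|^p dt)^{1/p}`,
whose limit as `R → ∞` defines the `H_p^λ` norm of the `λ`-Dirichlet polynomial
`∑_{n∈A} a_n e^{-λ_n s}`. -/
noncomputable def dirichletMpR (Λ : ℕ → ℝ) (p : ℝ) (A : Finset ℕ) (a : ℕ → ℂ) (R : ℝ) : ℝ :=
  ((1 / (2 * R)) * ∫ t in (-R)..R,
      ‖∑ n ∈ A, a n * Complex.exp (-(Complex.I * (Λ n * t)))‖ ^ p) ^ (1 / p)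

/-- The `H_p^λ` norm of the `λ`-Dirichlet polynomial `∑_{n∈A} a_n e^{-λ_n s}`, i.e.
`lim_{R→∞} M_{p,R}((a_n))`, expressed via `liminf` (these coincide under the standing
assumption that the limit exists). -/
noncomputable def dirichletHpNorm (Λ : ℕ → ℝ) (p : ℝ) (A : Finset ℕ) (a : ℕ → ℂ) : ℝ :=
  liminf (dirichletMpR Λ p A a) atTop


open MeasureTheory Filter Finset Real Complex

section aux

noncomputable def rootChar (q : ℕ) (c : ℕ) : ℂ :=
  Complex.exp ((2 * Real.pi * c / q : ℝ) * Complex.I)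

lemma rootChar_abs (q c : ℕ) : ‖rootChar q c‖ = 1 :=
  Complex.norm_exp_ofReal_mul_I _

lemma rootChar_mul_conj (q c : ℕ) :
    rootChar q c * (starRingEnd ℂ) (rootChar q c) = 1 := by
  rw [Complex.mul_conj, Complex.normSq_eq_norm_sq, rootChar_abs]
  norm_num

lemma orth_sum (q : ℕ) (hq : 0 < q) (k : ℤ) (hk : k ≠ 0) (hk' : k.natAbs < q) :
    ∑ c ∈ range q, Complex.exp ((2 * Real.pi * k * c / q : ℝ) * Complex.I) = 0 := by
  have hqR : (q : ℝ) ≠ 0 := Nat.cast_ne_zero.mpr hq.ne'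
  set r : ℂ := Complex.exp ((2 * Real.pi * k / q : ℝ) * Complex.I) with hr
  have hterm : ∀ c ∈ range q,
      Complex.exp ((2 * Real.pi * k * c / q : ℝ) * Complex.I) = r ^ c := by
    intro c _
    rw [hr, ← Complex.exp_nat_mul]
    congr 1
    push_cast
    ring
  rw [Finset.sum_congr rfl hterm]
  have hrq : r ^ q = 1 := by
    rw [hr, ← Complex.exp_nat_mul]
    have hqC : (q : ℂ) ≠ 0 := Nat.cast_ne_zero.mpr hq.ne'
    have hinv : (q:ℂ) * (q:ℂ)⁻¹ = 1 := mul_inv_cancel₀ hqC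
    have : (q : ℂ) * ((2 * Real.pi * k / q : ℝ) * Complex.I) = k * (2 * Real.pi * Complex.I) := by
      push_cast
      rw [show (q:ℂ) * (2 * (Real.pi:ℂ) * k / q * Complex.I)
          = (2 * (Real.pi:ℂ) * k * Complex.I) * ((q:ℂ) * (q:ℂ)⁻¹) from by ring, hinv]
      ring
    rw [this, Complex.exp_int_mul_two_pi_mul_I]
  have hrne : r ≠ 1 := by
    intro h
    rw [hr, Complex.exp_eq_one_iff] at h
    obtain ⟨n, hn⟩ := h
    have hn' : ((2 * Real.pi * k / q : ℝ) : ℂ) * Complex.I = ((2 * Real.pi * n : ℝ) : ℂ) * Complex.I := by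
      rw [hn]; push_cast; ring
    have hre : (2 * Real.pi * k / q : ℝ) = 2 * Real.pi * n := by
      have := mul_right_cancel₀ Complex.I_ne_zero hn'
      exact_mod_cast this
    have hkq : (k : ℝ) = n * q := by
      field_simp at hre
      have h2 : (2 * Real.pi) * (k:ℝ) = (2 * Real.pi) * ((n:ℝ) * q) := by rw [hre]; ring
      exact mul_left_cancel₀ (by positivity) h2
    have hkq' : k = n * q := by exact_mod_cast hkq
    have hn0 : n ≠ 0 := by rintro rfl; simp at hkq'; exact hk hkq'
    have : k.natAbs = n.natAbs * q := by rw [hkq', Int.natAbs_mul, Int.natAbs_natCast]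
    have : q ≤ k.natAbs := by
      rw [this]
      calc q = 1 * q := (one_mul q).symm
      _ ≤ n.natAbs * q := Nat.mul_le_mul_right q (Nat.one_le_iff_ne_zero.mpr (Int.natAbs_ne_zero.mpr hn0))
    omega
  rw [geom_sum_eq hrne, hrq]
  simp

lemma orth_pow (q : ℕ) (hq : 0 < q) {i j : ℕ} (hi : i < q) (hj : j < q) :
    ∑ c ∈ range q, rootChar q c ^ i * (starRingEnd ℂ) (rootChar q c) ^ j
      = if i = j then (q : ℂ) else 0 := by
  by_cases h : i = j
  · subst h
    simp only [← mul_pow, rootChar_mul_conj, one_pow, Finset.sum_const, card_range, if_pos rfl,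
      nsmul_eq_mul, mul_one]
    simp
  · set k : ℤ := (i : ℤ) - (j : ℤ) with hk
    have key : ∀ c ∈ range q, rootChar q c ^ i * (starRingEnd ℂ) (rootChar q c) ^ j
        = Complex.exp ((2 * Real.pi * (k : ℝ) * c / q : ℝ) * Complex.I) := by
      intro c _
      unfold rootChar
      rw [← Complex.exp_conj]
      have hconj : (starRingEnd ℂ) (((2 * Real.pi * c / q : ℝ) : ℂ) * Complex.I)
          = ((-(2 * Real.pi * c / q) : ℝ) : ℂ) * Complex.I := by
        rw [map_mul, Complex.conj_ofReal, Complex.conj_I]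
        push_cast
        ring
      rw [hconj, ← Complex.exp_nat_mul, ← Complex.exp_nat_mul, ← Complex.exp_add]
      congr 1
      push_cast [hk]
      ring
    rw [Finset.sum_congr rfl key, orth_sum q hq k
      (by rw [hk]; exact sub_ne_zero.mpr (by exact_mod_cast h)) (by rw [hk]; omega), if_neg h]

lemma scalar_moment (q m : ℕ) (hq : 0 < q) (hm : m < q) (x a : ℂ) :
    ∑ c ∈ range q, ‖x + rootChar q c * a‖ ^ (2 * m)
      = q * ∑ j ∈ range (m + 1), (m.choose j : ℝ) ^ 2
          * ‖x‖ ^ (2 * (m - j)) * ‖a‖ ^ (2 * j) := by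
  have hC : ∀ (z : ℂ) (k : ℕ), ((‖z‖ : ℂ)) ^ (2 * k)
      = z ^ k * (starRingEnd ℂ) z ^ k := by
    intro z k
    rw [pow_mul, ← Complex.ofReal_pow, Complex.sq_norm, ← Complex.mul_conj, mul_pow]
  apply Complex.ofReal_injective
  push_cast [hC]
  have expand : ∀ c, (x + rootChar q c * a) ^ m * (starRingEnd ℂ) (x + rootChar q c * a) ^ m
      = ∑ i ∈ range (m + 1), ∑ j ∈ range (m + 1),
          (((m.choose i : ℂ)) * ((m.choose j : ℂ))
            * (x ^ (m - i) * (starRingEnd ℂ) x ^ (m - j))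
            * (a ^ i * (starRingEnd ℂ) a ^ j))
          * (rootChar q c ^ i * (starRingEnd ℂ) (rootChar q c) ^ j) := by
    intro c
    rw [map_add, map_mul, add_comm x (rootChar q c * a),
      add_comm ((starRingEnd ℂ) x) ((starRingEnd ℂ) (rootChar q c) * (starRingEnd ℂ) a),
      add_pow, add_pow, Finset.sum_mul_sum]
    refine Finset.sum_congr rfl fun i _ => Finset.sum_congr rfl fun j _ => ?_
    rw [mul_pow, mul_pow]
    ring
  rw [Finset.sum_congr rfl (fun c _ => expand c), Finset.sum_comm]
  rw [Finset.sum_congr rfl (fun i (_ : i ∈ range (m+1)) => Finset.sum_comm)]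
  have inner : ∀ i ∈ range (m + 1), ∀ j ∈ range (m + 1),
      ∑ c ∈ range q, (((m.choose i : ℂ)) * ((m.choose j : ℂ))
            * (x ^ (m - i) * (starRingEnd ℂ) x ^ (m - j))
            * (a ^ i * (starRingEnd ℂ) a ^ j))
          * (rootChar q c ^ i * (starRingEnd ℂ) (rootChar q c) ^ j)
      = if i = j then (((m.choose i : ℂ)) * ((m.choose j : ℂ))
            * (x ^ (m - i) * (starRingEnd ℂ) x ^ (m - j))
            * (a ^ i * (starRingEnd ℂ) a ^ j)) * q else 0 := by
    intro i hi j hj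
    rw [← Finset.mul_sum, orth_pow q hq (by simp at hi; omega) (by simp at hj; omega)]
    split_ifs with h
    · rfl
    · exact mul_zero _
  rw [Finset.sum_congr rfl (fun i hi => Finset.sum_congr rfl (fun j hj => inner i hi j hj))]
  simp only [Finset.sum_ite_eq, Finset.mem_range]
  rw [Finset.mul_sum]
  refine Finset.sum_congr rfl fun j hj => ?_
  simp only [Finset.mem_range] at hj
  rw [if_pos hj]
  ring

lemma sum_pi_insert {M : Type*} [AddCommMonoid M] {k : ℕ} {A : Finset ℕ} (hk : k ∉ A)
    (t : Finset ℕ) (f : (∀ n ∈ insert k A, ℕ) → M) :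
    ∑ σ ∈ (insert k A).pi (fun _ => t), f σ
      = ∑ c ∈ t, ∑ σ ∈ A.pi (fun _ => t), f (Pi.cons A k c σ) := by
  rw [Finset.pi_insert hk, Finset.sum_biUnion]
  · exact Finset.sum_congr rfl fun c _ =>
      Finset.sum_image fun σ₁ _ σ₂ _ hh => Pi.cons_injective hk hh
  · intro c₁ h₁ c₂ h₂ hne
    simp only [Function.onFun]
    rw [Finset.disjoint_left]
    intro g hg₁ hg₂
    simp only [Finset.mem_image] at hg₁ hg₂
    obtain ⟨σ₁, _, rfl⟩ := hg₁
    obtain ⟨σ₂, _, h₂'⟩ := hg₂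
    apply hne
    have := congr_fun (congr_fun h₂' k) (Finset.mem_insert_self k A)
    rw [Pi.cons_same, Pi.cons_same] at this
    exact this.symm

/-- the unimodular weight function attached to a choice `σ` -/

noncomputable def sigW (q : ℕ) (A : Finset ℕ) (σ : ∀ n ∈ A, ℕ) (n : ℕ) : ℂ :=
  if h : n ∈ A then rootChar q (σ n h) else 1

noncomputable def sigSum (q : ℕ) (A : Finset ℕ) (b : ℕ → ℂ) (σ : ∀ n ∈ A, ℕ) : ℂ :=
  ∑ n ∈ A, sigW q A σ n * b n

lemma sigW_cons {q k c : ℕ} {A : Finset ℕ} (hk : k ∉ A) (σ : ∀ n ∈ A, ℕ) {n : ℕ} (hn : n ∈ A) :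
    sigW q (insert k A) (Pi.cons A k c σ) n = sigW q A σ n := by
  have hnk : k ≠ n := fun h => hk (h ▸ hn)
  rw [sigW, sigW, dif_pos (Finset.mem_insert_of_mem hn), dif_pos hn, Pi.cons_ne hnk]

lemma sigSum_cons {q k c : ℕ} {A : Finset ℕ} (hk : k ∉ A) (b : ℕ → ℂ) (σ : ∀ n ∈ A, ℕ) :
    sigSum q (insert k A) b (Pi.cons A k c σ)
      = sigSum q A b σ + rootChar q c * b k := by
  rw [sigSum, Finset.sum_insert hk, sigSum]
  rw [Finset.sum_congr rfl fun n hn => by rw [sigW_cons hk σ hn]]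
  rw [sigW, dif_pos (Finset.mem_insert_self k A), Pi.cons_same]
  ring

lemma second_moment (q : ℕ) (hq : 1 < q) (A : Finset ℕ) (b : ℕ → ℂ) :
    ∑ σ ∈ A.pi (fun _ => range q), ‖sigSum q A b σ‖ ^ 2
      = (q : ℝ) ^ A.card * ∑ n ∈ A, ‖b n‖ ^ 2 := by
  classical
  induction A using Finset.induction_on with
  | empty => simp [sigSum]
  | insert k A hk ih =>
    rw [sum_pi_insert hk]
    have step : ∀ c ∈ range q, ∀ σ ∈ A.pi (fun _ => range q),
        ‖sigSum q (insert k A) b (Pi.cons A k c σ)‖ ^ 2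
          = ‖sigSum q A b σ + rootChar q c * b k‖ ^ 2 := by
      intro c _ σ _
      rw [sigSum_cons hk]
    rw [Finset.sum_congr rfl fun c hc => Finset.sum_congr rfl fun σ hσ => step c hc σ hσ]
    rw [Finset.sum_comm]
    have inner : ∀ σ ∈ A.pi (fun _ => range q),
        ∑ c ∈ range q, ‖sigSum q A b σ + rootChar q c * b k‖ ^ 2
          = q * (‖sigSum q A b σ‖ ^ 2 + ‖b k‖ ^ 2) := by
      intro σ _
      have := scalar_moment q 1 (by omega) hq (sigSum q A b σ) (b k)
      simp only [mul_one] at this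
      rw [this]
      rw [Finset.sum_range_succ, Finset.sum_range_one]
      norm_num
    rw [Finset.sum_congr rfl inner, ← Finset.mul_sum, Finset.sum_add_distrib, ih,
      Finset.sum_const, Finset.card_insert_of_notMem hk, Finset.sum_insert hk]
    have hcard : (A.pi (fun _ => range q)).card = q ^ A.card := by
      rw [Finset.card_pi]
      simp
    rw [hcard]
    push_cast
    ring

/-- moment upper bound -/

lemma moment_bound (q : ℕ) (hq : 0 < q) (A : Finset ℕ) :
    ∀ m, m < q → ∀ b : ℕ → ℂ,
    ∑ σ ∈ A.pi (fun _ => range q), ‖sigSum q A b σ‖ ^ (2 * m)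
      ≤ (q : ℝ) ^ A.card * m.factorial * (∑ n ∈ A, ‖b n‖ ^ 2) ^ m := by
  classical
  induction A using Finset.induction_on with
  | empty =>
    intro m _ b
    rcases Nat.eq_zero_or_pos m with rfl | hm
    · simp [sigSum]
    · simp only [Finset.pi_empty, Finset.sum_singleton]
      have : sigSum q ∅ b (Pi.empty fun _ => ℕ) = 0 := by simp [sigSum]
      rw [this]
      simp only [norm_zero]
      rw [zero_pow (by omega)]
      positivity
  | insert k A hk ih =>
    intro m hm b
    have hT : 0 ≤ ∑ n ∈ A, ‖b n‖ ^ 2 := by positivity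
    set T := ∑ n ∈ A, ‖b n‖ ^ 2 with hTdef
    rw [sum_pi_insert hk]
    rw [Finset.sum_congr rfl fun c hc => Finset.sum_congr rfl fun σ hσ => by
      rw [sigSum_cons hk]]
    rw [Finset.sum_comm]
    have inner : ∀ σ ∈ A.pi (fun _ => range q),
        ∑ c ∈ range q, ‖sigSum q A b σ + rootChar q c * b k‖ ^ (2 * m)
          = q * ∑ j ∈ range (m + 1), (m.choose j : ℝ) ^ 2
              * ‖sigSum q A b σ‖ ^ (2 * (m - j)) * ‖b k‖ ^ (2 * j) :=
      fun σ _ => scalar_moment q m hq hm (sigSum q A b σ) (b k)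
    rw [Finset.sum_congr rfl inner, ← Finset.mul_sum]
    have swap : ∑ j ∈ range (m + 1), ∑ σ ∈ A.pi (fun _ => range q),
        (m.choose j : ℝ) ^ 2 * ‖sigSum q A b σ‖ ^ (2 * (m - j))
          * ‖b k‖ ^ (2 * j)
        ≤ ∑ j ∈ range (m + 1), (m.choose j : ℝ) ^ 2 * ‖b k‖ ^ (2 * j)
            * ((q : ℝ) ^ A.card * (m - j).factorial * T ^ (m - j)) := by
      refine Finset.sum_le_sum fun j _ => ?_
      calc ∑ σ ∈ A.pi (fun _ => range q), (m.choose j : ℝ) ^ 2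
            * ‖sigSum q A b σ‖ ^ (2 * (m - j)) * ‖b k‖ ^ (2 * j)
          = (m.choose j : ℝ) ^ 2 * ‖b k‖ ^ (2 * j)
            * ∑ σ ∈ A.pi (fun _ => range q), ‖sigSum q A b σ‖ ^ (2 * (m - j)) := by
            rw [Finset.mul_sum]; exact Finset.sum_congr rfl fun σ _ => by ring
        _ ≤ (m.choose j : ℝ) ^ 2 * ‖b k‖ ^ (2 * j)
            * ((q : ℝ) ^ A.card * (m - j).factorial * T ^ (m - j)) := by
            refine mul_le_mul_of_nonneg_left (ih (m - j) (by omega) b) (by positivity)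
    have bound2 : ∑ j ∈ range (m + 1), (m.choose j : ℝ) ^ 2 * ‖b k‖ ^ (2 * j)
            * ((q : ℝ) ^ A.card * (m - j).factorial * T ^ (m - j))
        ≤ (q : ℝ) ^ A.card * m.factorial
          * ∑ j ∈ range (m + 1), (m.choose j : ℝ) * ‖b k‖ ^ (2 * j) * T ^ (m - j) := by
      rw [Finset.mul_sum]
      refine Finset.sum_le_sum fun j hj => ?_
      simp only [Finset.mem_range] at hj
      have hchoose : (m.choose j : ℝ) ^ 2 * (m - j).factorial
          ≤ (m.factorial : ℝ) * m.choose j := by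
        have hnat : m.choose j * (m - j).factorial ≤ m.factorial := by
          have h1 : m.choose j * j.factorial * (m - j).factorial = m.factorial :=
            Nat.choose_mul_factorial_mul_factorial (by omega)
          calc m.choose j * (m - j).factorial
              ≤ m.choose j * j.factorial * (m - j).factorial := by
                have : 1 ≤ j.factorial := j.factorial_pos
                nlinarith [Nat.zero_le (m.choose j * (m-j).factorial)]
            _ = m.factorial := h1
        calc (m.choose j : ℝ) ^ 2 * (m - j).factorial
            = (m.choose j : ℝ) * (m.choose j * (m - j).factorial) := by ring
          _ ≤ (m.choose j : ℝ) * m.factorial := by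
              refine mul_le_mul_of_nonneg_left ?_ (by positivity)
              exact_mod_cast hnat
          _ = (m.factorial : ℝ) * m.choose j := by ring
      have hB : 0 ≤ ‖b k‖ ^ (2*j) * ((q:ℝ) ^ A.card * T ^ (m - j)) := by positivity
      calc (m.choose j : ℝ) ^ 2 * ‖b k‖ ^ (2 * j)
            * ((q : ℝ) ^ A.card * (m - j).factorial * T ^ (m - j))
          = ((m.choose j : ℝ) ^ 2 * (m - j).factorial)
            * (‖b k‖ ^ (2*j) * ((q:ℝ) ^ A.card * T ^ (m - j))) := by ring
        _ ≤ ((m.factorial : ℝ) * m.choose j)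
            * (‖b k‖ ^ (2*j) * ((q:ℝ) ^ A.card * T ^ (m - j))) :=
            mul_le_mul_of_nonneg_right hchoose hB
        _ = (q:ℝ) ^ A.card * m.factorial
            * ((m.choose j : ℝ) * ‖b k‖ ^ (2 * j) * T ^ (m - j)) := by ring
    have final : (q:ℝ) * ((q : ℝ) ^ A.card * m.factorial
          * ∑ j ∈ range (m + 1), (m.choose j : ℝ) * ‖b k‖ ^ (2 * j) * T ^ (m - j))
        = (q : ℝ) ^ (insert k A).card * m.factorial
          * (∑ n ∈ insert k A, ‖b n‖ ^ 2) ^ m := by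
      rw [Finset.sum_insert hk, Finset.card_insert_of_notMem hk]
      rw [add_pow]
      have : ∀ j ∈ range (m+1), (‖b k‖ ^ 2) ^ j * T ^ (m - j) * (m.choose j : ℝ)
          = (m.choose j : ℝ) * ‖b k‖ ^ (2 * j) * T ^ (m - j) := by
        intro j _
        rw [← pow_mul]
        ring
      rw [Finset.sum_congr rfl this]
      push_cast
      ring
    calc (q:ℝ) * ∑ σ ∈ A.pi (fun _ => range q), ∑ j ∈ range (m + 1), (m.choose j : ℝ) ^ 2
            * ‖sigSum q A b σ‖ ^ (2 * (m - j)) * ‖b k‖ ^ (2 * j)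
        = (q:ℝ) * ∑ j ∈ range (m + 1), ∑ σ ∈ A.pi (fun _ => range q), (m.choose j : ℝ) ^ 2
            * ‖sigSum q A b σ‖ ^ (2 * (m - j)) * ‖b k‖ ^ (2 * j) := by
          rw [Finset.sum_comm]
      _ ≤ (q:ℝ) * ((q : ℝ) ^ A.card * m.factorial
            * ∑ j ∈ range (m + 1), (m.choose j : ℝ) * ‖b k‖ ^ (2 * j) * T ^ (m - j)) := by
          refine mul_le_mul_of_nonneg_left (le_trans swap bound2) (by positivity)
      _ = _ := final

variable {ι : Type*}

lemma jensen_avg (S : Finset ι) (hS : S.Nonempty) (z : ι → ℝ) (hz : ∀ i ∈ S, 0 ≤ z i)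
    (r : ℝ) (hr : 1 ≤ r) :
    ((S.card : ℝ)⁻¹ * ∑ i ∈ S, z i) ^ r ≤ (S.card : ℝ)⁻¹ * ∑ i ∈ S, z i ^ r := by
  have hN : (0:ℝ) < S.card := by exact_mod_cast Finset.card_pos.mpr hS
  have h := Real.rpow_arith_mean_le_arith_mean_rpow S (fun _ => (S.card : ℝ)⁻¹) z
    (fun i _ => by positivity) (by rw [Finset.sum_const, nsmul_eq_mul, mul_inv_cancel₀ hN.ne'])
    hz hr
  calc ((S.card : ℝ)⁻¹ * ∑ i ∈ S, z i) ^ r = (∑ i ∈ S, (S.card : ℝ)⁻¹ * z i) ^ r := by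
        rw [Finset.mul_sum]
    _ ≤ ∑ i ∈ S, (S.card : ℝ)⁻¹ * z i ^ r := h
    _ = (S.card : ℝ)⁻¹ * ∑ i ∈ S, z i ^ r := by rw [Finset.mul_sum]

/-- averaged Jensen, upper form: `N⁻¹ ∑ z ≤ (N⁻¹ ∑ z^r)^(1/r)` -/

lemma jensen_avg' (S : Finset ι) (hS : S.Nonempty) (z : ι → ℝ) (hz : ∀ i ∈ S, 0 ≤ z i)
    (r : ℝ) (hr : 1 ≤ r) (K : ℝ) (hK : 0 ≤ K)
    (h : (S.card : ℝ)⁻¹ * ∑ i ∈ S, z i ^ r ≤ K) :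
    (S.card : ℝ)⁻¹ * ∑ i ∈ S, z i ≤ K ^ r⁻¹ := by
  have hN : (0:ℝ) < S.card := by exact_mod_cast Finset.card_pos.mpr hS
  have hr0 : r ≠ 0 := by positivity
  have h0 : 0 ≤ (S.card : ℝ)⁻¹ * ∑ i ∈ S, z i := by
    have : 0 ≤ ∑ i ∈ S, z i := Finset.sum_nonneg hz
    positivity
  have h1 : ((S.card : ℝ)⁻¹ * ∑ i ∈ S, z i) ^ r ≤ K := le_trans (jensen_avg S hS z hz r hr) h
  calc (S.card : ℝ)⁻¹ * ∑ i ∈ S, z i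
      = (((S.card : ℝ)⁻¹ * ∑ i ∈ S, z i) ^ r) ^ r⁻¹ := (Real.rpow_rpow_inv h0 hr0).symm
    _ ≤ K ^ r⁻¹ := Real.rpow_le_rpow (Real.rpow_nonneg h0 r) h1 (by positivity)

lemma khin_upper_abstract (S : Finset ι) (hS : S.Nonempty) (f : ι → ℝ)
    (hf : ∀ σ ∈ S, 0 ≤ f σ) (p : ℝ) (hp : 1 ≤ p) (m : ℕ) (hm : 1 ≤ m) (hpm : p ≤ 2 * m)
    (K : ℝ) (hK : 0 ≤ K) (h2m : ∑ σ ∈ S, f σ ^ (2 * m) ≤ (S.card : ℝ) * K) :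
    ∑ σ ∈ S, f σ ^ p ≤ (S.card : ℝ) * K ^ (p / (2 * m)) := by
  have hN : (0:ℝ) < S.card := by exact_mod_cast Finset.card_pos.mpr hS
  have hp0 : 0 < p := lt_of_lt_of_le one_pos hp
  have hm0 : (0:ℝ) < 2 * m := by positivity
  have hr : 1 ≤ 2 * (m:ℝ) / p := by
    rw [le_div_iff₀ hp0]
    linarith
  have hz : ∀ i ∈ S, 0 ≤ f i ^ p := fun i hi => Real.rpow_nonneg (hf i hi) p
  have hpow : ∀ i ∈ S, (f i ^ p) ^ (2 * (m:ℝ) / p) = f i ^ (2 * m) := by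
    intro i hi
    rw [← Real.rpow_natCast (f i) (2 * m), ← Real.rpow_mul (hf i hi)]
    congr 1
    push_cast
    field_simp
  have hsum : (S.card : ℝ)⁻¹ * ∑ i ∈ S, (f i ^ p) ^ (2 * (m:ℝ) / p) ≤ K := by
    rw [Finset.sum_congr rfl hpow]
    calc (S.card : ℝ)⁻¹ * ∑ i ∈ S, f i ^ (2 * m)
        ≤ (S.card : ℝ)⁻¹ * ((S.card : ℝ) * K) :=
          mul_le_mul_of_nonneg_left h2m (by positivity)
      _ = K := by field_simp
  have := jensen_avg' S hS (fun i => f i ^ p) hz (2 * (m:ℝ) / p) hr K hK hsum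
  have hinv : (2 * (m:ℝ) / p)⁻¹ = p / (2 * m) := by
    field_simp
  rw [hinv] at this
  calc ∑ σ ∈ S, f σ ^ p = (S.card : ℝ) * ((S.card : ℝ)⁻¹ * ∑ σ ∈ S, f σ ^ p) := by field_simp
    _ ≤ (S.card : ℝ) * K ^ (p / (2 * m)) := mul_le_mul_of_nonneg_left this (by positivity)

lemma khin_lower_abstract (S : Finset ι) (hS : S.Nonempty) (f : ι → ℝ)
    (hf : ∀ σ ∈ S, 0 ≤ f σ) (p : ℝ) (hp : 1 ≤ p) (T : ℝ) (hT : 0 ≤ T)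
    (h2 : ∑ σ ∈ S, f σ ^ (2:ℕ) = (S.card : ℝ) * T)
    (h4 : ∑ σ ∈ S, f σ ^ (4:ℕ) ≤ (S.card : ℝ) * (2 * T ^ 2)) :
    (S.card : ℝ) * T ^ (p / 2) / 2 ≤ ∑ σ ∈ S, f σ ^ p := by
  have hN : (0:ℝ) < S.card := by exact_mod_cast Finset.card_pos.mpr hS
  have hp0 : 0 < p := lt_of_lt_of_le one_pos hp
  have hEp : 0 ≤ ∑ σ ∈ S, f σ ^ p :=
    Finset.sum_nonneg fun i hi => Real.rpow_nonneg (hf i hi) p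
  rcases eq_or_lt_of_le hT with rfl | hTpos
  · rw [Real.zero_rpow (by positivity)]
    simpa using hEp
  rcases le_or_gt 2 p with hp2 | hp2
  -- easy case : p ≥ 2, Jensen
  · have hz : ∀ i ∈ S, 0 ≤ f i ^ (2:ℕ) := fun i hi => by positivity
    have hJ := jensen_avg S hS (fun i => f i ^ (2:ℕ)) hz (p / 2) (by linarith)
    have hpow : ∀ i ∈ S, (f i ^ (2:ℕ)) ^ (p/2) = f i ^ p := by
      intro i hi
      rw [← Real.rpow_natCast (f i) 2, ← Real.rpow_mul (hf i hi)]
      congr 1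
      push_cast
      field_simp
    rw [Finset.sum_congr rfl hpow] at hJ
    rw [h2] at hJ
    have hL : ((S.card : ℝ)⁻¹ * ((S.card : ℝ) * T)) ^ (p/2) = T ^ (p/2) := by
      congr 1
      field_simp
    rw [hL] at hJ
    have := mul_le_mul_of_nonneg_left hJ hN.le
    calc (S.card : ℝ) * T ^ (p/2) / 2 ≤ (S.card : ℝ) * T ^ (p/2) := by
          have : 0 ≤ (S.card : ℝ) * T ^ (p/2) := by positivity
          linarith
      _ ≤ (S.card : ℝ) * ((S.card : ℝ)⁻¹ * ∑ σ ∈ S, f σ ^ p) := this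
      _ = ∑ σ ∈ S, f σ ^ p := by field_simp
  -- hard case : 1 ≤ p < 2 : Cauchy-Schwarz against the 4th moment
  · have hu : ∀ i, i ∈ S → 0 ≤ f i := hf
    -- Cauchy-Schwarz
    have hCS : ((S.card : ℝ) * T) ^ 2
        ≤ (∑ σ ∈ S, f σ ^ p) * ∑ σ ∈ S, f σ ^ (4 - p) := by
      rw [← h2]
      have hprod : ∀ i ∈ S, f i ^ (2:ℕ) = f i ^ (p/2) * f i ^ ((4-p)/2) := by
        intro i hi
        rw [← Real.rpow_add' (hf i hi) (by intro h; linarith : p/2 + (4-p)/2 ≠ 0)]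
        rw [show p/2 + (4-p)/2 = ((2:ℕ):ℝ) by push_cast; ring, Real.rpow_natCast]
      rw [Finset.sum_congr rfl hprod]
      have h1 : ∀ i ∈ S, (f i ^ (p/2)) ^ (2:ℕ) = f i ^ p := by
        intro i hi
        rw [← Real.rpow_natCast (f i ^ (p/2)) 2, ← Real.rpow_mul (hf i hi)]
        norm_num
      have h2' : ∀ i ∈ S, (f i ^ ((4-p)/2)) ^ (2:ℕ) = f i ^ (4 - p) := by
        intro i hi
        rw [← Real.rpow_natCast (f i ^ ((4-p)/2)) 2, ← Real.rpow_mul (hf i hi)]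
        norm_num
      calc (∑ i ∈ S, f i ^ (p/2) * f i ^ ((4-p)/2)) ^ 2
          ≤ (∑ i ∈ S, (f i ^ (p/2)) ^ (2:ℕ)) * ∑ i ∈ S, (f i ^ ((4-p)/2)) ^ (2:ℕ) :=
            Finset.sum_mul_sq_le_sq_mul_sq S _ _
        _ = (∑ σ ∈ S, f σ ^ p) * ∑ σ ∈ S, f σ ^ (4 - p) := by
            rw [Finset.sum_congr rfl h1, Finset.sum_congr rfl h2']
    -- Jensen for the (4-p) moment against the 4th moment
    have h4p : (S.card : ℝ)⁻¹ * ∑ σ ∈ S, f σ ^ (4 - p) ≤ (2 * T ^ 2) ^ ((4-p)/4) := by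
      have hz : ∀ i ∈ S, 0 ≤ f i ^ (4 - p) := fun i hi => Real.rpow_nonneg (hf i hi) _
      have hr : 1 ≤ 4 / (4 - p) := by
        rw [le_div_iff₀ (by linarith)]
        linarith
      have hpow : ∀ i ∈ S, (f i ^ (4 - p)) ^ (4/(4-p)) = f i ^ (4:ℕ) := by
        intro i hi
        rw [← Real.rpow_natCast (f i) 4, ← Real.rpow_mul (hf i hi)]
        congr 1
        push_cast
        rw [mul_div_assoc', mul_comm, mul_div_assoc,
          div_self (by linarith : (4:ℝ) - p ≠ 0), mul_one]
      have hsum : (S.card : ℝ)⁻¹ * ∑ i ∈ S, (f i ^ (4 - p)) ^ (4/(4-p)) ≤ 2 * T ^ 2 := by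
        rw [Finset.sum_congr rfl hpow]
        calc (S.card : ℝ)⁻¹ * ∑ i ∈ S, f i ^ (4:ℕ)
            ≤ (S.card : ℝ)⁻¹ * ((S.card : ℝ) * (2 * T ^ 2)) :=
              mul_le_mul_of_nonneg_left h4 (by positivity)
          _ = 2 * T ^ 2 := by field_simp
      have := jensen_avg' S hS (fun i => f i ^ (4 - p)) hz (4/(4-p)) hr (2 * T ^ 2)
        (by positivity) hsum
      rwa [show (4/(4-p))⁻¹ = (4-p)/4 by field_simp] at this
    -- combine
    set Ep := ∑ σ ∈ S, f σ ^ p with hEpdef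
    have key : ((S.card : ℝ) * T) ^ 2 ≤ Ep * ((S.card : ℝ) * (2 * T ^ 2) ^ ((4-p)/4)) := by
      refine le_trans hCS ?_
      refine mul_le_mul_of_nonneg_left ?_ hEp
      calc ∑ σ ∈ S, f σ ^ (4 - p)
          = (S.card : ℝ) * ((S.card : ℝ)⁻¹ * ∑ σ ∈ S, f σ ^ (4 - p)) := by field_simp
        _ ≤ (S.card : ℝ) * (2 * T ^ 2) ^ ((4-p)/4) :=
            mul_le_mul_of_nonneg_left h4p hN.le
    have hpos : (0:ℝ) < (S.card : ℝ) * (2 * T ^ 2) ^ ((4-p)/4) := by positivity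
    refine le_of_mul_le_mul_right ?_ hpos
    refine le_trans ?_ key
    have hsplit : (2*T^2 : ℝ)^((4-p)/4) = 2^((4-p)/4) * T^((4-p)/2) := by
      rw [Real.mul_rpow (by norm_num) (by positivity)]
      congr 1
      rw [← Real.rpow_natCast T 2, ← Real.rpow_mul hT]
      congr 1
      push_cast
      ring
    have hTT : T ^ (p/2) * T ^ ((4-p)/2) = T ^ (2:ℕ) := by
      rw [← Real.rpow_add hTpos, show p/2 + (4-p)/2 = ((2:ℕ):ℝ) by push_cast; ring,
        Real.rpow_natCast]
    have h2e : (2:ℝ)^((4-p)/4) ≤ 2 := by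
      calc (2:ℝ)^((4-p)/4) ≤ (2:ℝ)^(1:ℝ) :=
            Real.rpow_le_rpow_of_exponent_le (by norm_num) (by linarith)
        _ = 2 := Real.rpow_one 2
    calc (S.card:ℝ) * T^(p/2)/2 * ((S.card:ℝ) * (2*T^2)^((4-p)/4))
        = (2:ℝ)^((4-p)/4)/2 * ((S.card:ℝ)^2 * (T^(p/2) * T^((4-p)/2))) := by
          rw [hsplit]; ring
      _ = (2:ℝ)^((4-p)/4)/2 * ((S.card:ℝ)^2 * T^(2:ℕ)) := by rw [hTT]
      _ ≤ 1 * ((S.card:ℝ)^2 * T^(2:ℕ)) := by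
          refine mul_le_mul_of_nonneg_right (by linarith) (by positivity)
      _ = ((S.card:ℝ) * T)^2 := by ring

end aux


/-- If the canonical basis `{e^{-λ_n s}}` is unconditional in `H_p^λ`, then on Dirichlet
polynomials the `H_p^λ` norm is equivalent to the `H_2^λ` norm `(∑|a_n|²)^{1/2}`. -/
theorem unconditional_implies_H2 (Λ : ℕ → ℝ) (hmono : StrictMono Λ)
    (hpos : ∀ n, 0 ≤ Λ n) (hunb : Tendsto Λ atTop atTop)
    (p : ℝ) (hp : 1 ≤ p)
    (hlim : ∀ (A : Finset ℕ) (a : ℕ → ℂ),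
      Tendsto (dirichletMpR Λ p A a) atTop (nhds (dirichletHpNorm Λ p A a)))
    (C : ℝ) (hC : 1 ≤ C)
    (huncond : ∀ (A : Finset ℕ) (a w : ℕ → ℂ), (∀ n ∈ A, ‖w n‖ = 1) →
      dirichletHpNorm Λ p A (fun n => w n * a n) ≤ C * dirichletHpNorm Λ p A a) :
    ∃ c' C' : ℝ, 0 < c' ∧ 0 < C' ∧ ∀ (A : Finset ℕ) (a : ℕ → ℂ),
      c' * Real.sqrt (∑ n ∈ A, ‖a n‖ ^ 2) ≤ dirichletHpNorm Λ p A a ∧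
        dirichletHpNorm Λ p A a ≤ C' * Real.sqrt (∑ n ∈ A, ‖a n‖ ^ 2) := by
  classical
  have hp0 : 0 < p := by linarith
  have hC0 : 0 < C := by linarith
  set m := max 2 (Nat.ceil (p/2)) with hmdef
  have hm2 : 2 ≤ m := le_max_left _ _
  have hm1 : 1 ≤ m := by omega
  have hm0 : 0 < m := by omega
  have hpm : p ≤ 2 * m := by
    have h1 : p/2 ≤ (Nat.ceil (p/2) : ℝ) := Nat.le_ceil _
    have h2 : (Nat.ceil (p/2) : ℝ) ≤ (m:ℝ) := by exact_mod_cast le_max_right 2 (Nat.ceil (p/2))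
    linarith
  set q := m + 1 with hqdef
  have hq0 : 0 < q := by omega
  have hq1 : 1 < q := by omega
  have hmq : m < q := by omega
  -- continuity of the integrands
  have hcont : ∀ (A : Finset ℕ) (b : ℕ → ℂ), Continuous fun t : ℝ =>
      ‖∑ n ∈ A, b n * Complex.exp (-(Complex.I * (Λ n * t)))‖ ^ p := by
    intro A b
    apply Continuous.rpow_const
    · apply continuous_norm.comp
      apply continuous_finset_sum
      intro n _
      exact continuous_const.mul (Complex.continuous_exp.comp
        ((continuous_const.mul (continuous_const.mul Complex.continuous_ofReal)).neg))
    · exact fun _ => Or.inr hp0.le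
  -- nonnegativity of the means
  have hbase : ∀ (A : Finset ℕ) (b : ℕ → ℂ) (R : ℝ), 0 < R →
      0 ≤ (1 / (2 * R)) * ∫ t in (-R)..R,
        ‖∑ n ∈ A, b n * Complex.exp (-(Complex.I * (Λ n * t)))‖ ^ p := by
    intro A b R hR
    have h1 : 0 ≤ ∫ t in (-R)..R,
        ‖∑ n ∈ A, b n * Complex.exp (-(Complex.I * (Λ n * t)))‖ ^ p :=
      intervalIntegral.integral_nonneg (by linarith) (fun u _ => by positivity)
    have h2 : (0:ℝ) ≤ 1 / (2*R) := by positivity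
    exact mul_nonneg h2 h1
  have hMnn : ∀ (A : Finset ℕ) (b : ℕ → ℂ) (R : ℝ), 0 < R → 0 ≤ dirichletMpR Λ p A b R :=
    fun A b R hR => Real.rpow_nonneg (hbase A b R hR) _
  have hMpow : ∀ (A : Finset ℕ) (b : ℕ → ℂ) (R : ℝ), 0 < R →
      dirichletMpR Λ p A b R ^ p = (1 / (2 * R)) * ∫ t in (-R)..R,
        ‖∑ n ∈ A, b n * Complex.exp (-(Complex.I * (Λ n * t)))‖ ^ p := by
    intro A b R hR
    rw [dirichletMpR, one_div p, Real.rpow_inv_rpow (hbase A b R hR) hp0.ne']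
  have hnorm_nn : ∀ (A : Finset ℕ) (b : ℕ → ℂ), 0 ≤ dirichletHpNorm Λ p A b := by
    intro A b
    refine ge_of_tendsto (hlim A b) ?_
    filter_upwards [eventually_gt_atTop (0:ℝ)] with R hR
    exact hMnn A b R hR
  refine ⟨1/(2*C), C * ((m.factorial : ℝ)) ^ ((1:ℝ)/(2*m)), by positivity, by positivity, ?_⟩
  intro A a
  set T := ∑ n ∈ A, ‖a n‖ ^ 2 with hTdef
  have hT0 : 0 ≤ T := by rw [hTdef]; positivity
  set S := A.pi (fun _ => range q) with hSdef
  have hSne : S.Nonempty := Finset.pi_nonempty.mpr fun n _ => ⟨0, Finset.mem_range.mpr hq0⟩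
  have hN0' : 0 < S.card := Finset.card_pos.mpr hSne
  have hcard : ((S.card : ℝ)) = (q:ℝ) ^ A.card := by
    rw [hSdef, Finset.card_pi, Finset.prod_const, Finset.card_range]
    push_cast
    ring
  have hN0 : (0:ℝ) < (S.card : ℝ) := by exact_mod_cast hN0'
  set Kup := ((m.factorial : ℝ) * T ^ m) ^ (p / (2 * m)) with hKdef
  have hKup0 : 0 ≤ Kup := Real.rpow_nonneg (by positivity) _
  -- Khintchine inequalities for fixed coefficients with ℓ²-mass T
  have khin : ∀ b : ℕ → ℂ, (∑ n ∈ A, ‖b n‖ ^ 2) = T →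
      (S.card : ℝ) * T ^ (p/2) / 2 ≤ (∑ σ ∈ S, ‖sigSum q A b σ‖ ^ p) ∧
      (∑ σ ∈ S, ‖sigSum q A b σ‖ ^ p) ≤ (S.card : ℝ) * Kup := by
    intro b hb
    have hf : ∀ σ ∈ S, 0 ≤ ‖sigSum q A b σ‖ := fun σ _ => norm_nonneg _
    have h2 : ∑ σ ∈ S, ‖sigSum q A b σ‖ ^ (2:ℕ) = (S.card : ℝ) * T := by
      have h := second_moment q hq1 A b
      rw [hb] at h
      rw [← hSdef] at h
      rw [h, hcard]
    have h4 : ∑ σ ∈ S, ‖sigSum q A b σ‖ ^ (4:ℕ) ≤ (S.card : ℝ) * (2 * T^2) := by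
      have h := moment_bound q hq0 A 2 (by omega) b
      rw [hb, ← hSdef] at h
      calc ∑ σ ∈ S, ‖sigSum q A b σ‖ ^ (4:ℕ)
          = ∑ σ ∈ S, ‖sigSum q A b σ‖ ^ (2*2) := by norm_num
        _ ≤ (q:ℝ) ^ A.card * (Nat.factorial 2) * T ^ 2 := h
        _ = (S.card : ℝ) * (2 * T^2) := by rw [hcard]; norm_num [Nat.factorial]; ring
    have h2m := moment_bound q hq0 A m hmq b
    rw [hb, ← hSdef] at h2m
    constructor
    · exact khin_lower_abstract S hSne _ hf p hp T hT0 h2 h4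
    · refine khin_upper_abstract S hSne _ hf p hp m hm1 hpm ((m.factorial:ℝ) * T^m)
        (by positivity) ?_
      calc ∑ σ ∈ S, ‖sigSum q A b σ‖ ^ (2*m)
          ≤ (q:ℝ)^A.card * m.factorial * T^m := h2m
        _ = (S.card : ℝ) * ((m.factorial:ℝ) * T^m) := by rw [hcard]; ring
  -- pointwise (in t) bounds for the sign-averaged integrand
  have hpoint : ∀ t : ℝ,
      (S.card : ℝ) * T ^ (p/2) / 2 ≤ (∑ σ ∈ S, ‖∑ n ∈ A, sigW q A σ n * a n * Complex.exp (-(Complex.I * (Λ n * t)))‖ ^ p) ∧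
      (∑ σ ∈ S, ‖∑ n ∈ A, sigW q A σ n * a n * Complex.exp (-(Complex.I * (Λ n * t)))‖ ^ p)
        ≤ (S.card : ℝ) * Kup := by
    intro t
    have hb : (∑ n ∈ A, ‖a n * Complex.exp (-(Complex.I * (Λ n * t)))‖ ^ 2) = T := by
      rw [hTdef]
      refine Finset.sum_congr rfl fun n _ => ?_
      rw [norm_mul, Complex.norm_exp]
      have hre : (-(Complex.I * ((Λ n : ℂ) * (t:ℂ)))).re = 0 := by simp
      rw [hre, Real.exp_zero, mul_one]
    have hident : ∀ σ, (∑ n ∈ A, sigW q A σ n * a n * Complex.exp (-(Complex.I * (Λ n * t))))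
        = sigSum q A (fun n => a n * Complex.exp (-(Complex.I * (Λ n * t)))) σ := by
      intro σ
      rw [sigSum]
      exact Finset.sum_congr rfl fun n _ => by ring
    have hsum_eq : (∑ σ ∈ S, ‖∑ n ∈ A, sigW q A σ n * a n * Complex.exp (-(Complex.I * (Λ n * t)))‖ ^ p)
        = ∑ σ ∈ S, ‖sigSum q A (fun n => a n * Complex.exp (-(Complex.I * (Λ n * t)))) σ‖ ^ p :=
      Finset.sum_congr rfl fun σ _ => by rw [hident σ]
    rw [hsum_eq]
    exact khin _ hb
  -- fixed R sandwich
  have hsand : ∀ R : ℝ, 0 < R →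
      (S.card : ℝ) * T ^ (p/2) / 2 ≤ (∑ σ ∈ S, dirichletMpR Λ p A (fun n => sigW q A σ n * a n) R ^ p) ∧
      (∑ σ ∈ S, dirichletMpR Λ p A (fun n => sigW q A σ n * a n) R ^ p) ≤ (S.card : ℝ) * Kup := by
    intro R hR
    have hRR : (-R) ≤ R := by linarith
    have hint : ∀ σ : (∀ n ∈ A, ℕ), IntervalIntegrable (fun t =>
        ‖∑ n ∈ A, sigW q A σ n * a n * Complex.exp (-(Complex.I * (Λ n * t)))‖ ^ p)
        MeasureTheory.volume (-R) R :=
      fun σ => (hcont A (fun n => sigW q A σ n * a n)).intervalIntegrable _ _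
    have hintS : IntervalIntegrable (fun t => ∑ σ ∈ S,
        ‖∑ n ∈ A, sigW q A σ n * a n * Complex.exp (-(Complex.I * (Λ n * t)))‖ ^ p)
        MeasureTheory.volume (-R) R := by
      apply Continuous.intervalIntegrable
      exact continuous_finset_sum _ fun σ _ => hcont A (fun n => sigW q A σ n * a n)
    have hsum_eq : (∑ σ ∈ S, dirichletMpR Λ p A (fun n => sigW q A σ n * a n) R ^ p)
        = (1/(2*R)) * ∫ t in (-R)..R, ∑ σ ∈ S,
            ‖∑ n ∈ A, sigW q A σ n * a n * Complex.exp (-(Complex.I * (Λ n * t)))‖ ^ p := by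
      rw [intervalIntegral.integral_finset_sum (fun σ _ => hint σ), Finset.mul_sum]
      exact Finset.sum_congr rfl fun σ _ => hMpow A (fun n => sigW q A σ n * a n) R hR
    rw [hsum_eq]
    have hconst : ∀ c : ℝ, (1/(2*R)) * ∫ _t in (-R)..R, c = c := by
      intro c
      rw [intervalIntegral.integral_const, smul_eq_mul]
      field_simp
      ring
    constructor
    · calc (S.card : ℝ) * T ^ (p/2) / 2 = (1/(2*R)) * ∫ _t in (-R)..R, ((S.card : ℝ) * T ^ (p/2) / 2) :=
            (hconst _).symm
        _ ≤ _ := by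
            refine mul_le_mul_of_nonneg_left ?_ (by positivity)
            exact intervalIntegral.integral_mono_on hRR (intervalIntegrable_const) hintS
              (fun t _ => (hpoint t).1)
    · calc (1/(2*R)) * ∫ t in (-R)..R, ∑ σ ∈ S,
            ‖∑ n ∈ A, sigW q A σ n * a n * Complex.exp (-(Complex.I * (Λ n * t)))‖ ^ p
          ≤ (1/(2*R)) * ∫ _t in (-R)..R, ((S.card : ℝ) * Kup) := by
            refine mul_le_mul_of_nonneg_left ?_ (by positivity)
            exact intervalIntegral.integral_mono_on hRR hintS (intervalIntegrable_const)
              (fun t _ => (hpoint t).2)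
        _ = (S.card : ℝ) * Kup := hconst _
  -- pass to the limit R → ∞
  have hsum_tend : Tendsto (fun R => ∑ σ ∈ S, dirichletMpR Λ p A (fun n => sigW q A σ n * a n) R ^ p)
      atTop (nhds (∑ σ ∈ S, dirichletHpNorm Λ p A (fun n => sigW q A σ n * a n) ^ p)) :=
    tendsto_finset_sum S fun σ _ => (hlim A _).rpow_const (Or.inr hp0.le)
  have hlow : (S.card : ℝ) * T ^ (p/2) / 2
      ≤ ∑ σ ∈ S, dirichletHpNorm Λ p A (fun n => sigW q A σ n * a n) ^ p := by
    refine ge_of_tendsto hsum_tend ?_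
    filter_upwards [eventually_gt_atTop (0:ℝ)] with R hR
    exact (hsand R hR).1
  have hup : (∑ σ ∈ S, dirichletHpNorm Λ p A (fun n => sigW q A σ n * a n) ^ p) ≤ (S.card : ℝ) * Kup := by
    refine le_of_tendsto hsum_tend ?_
    filter_upwards [eventually_gt_atTop (0:ℝ)] with R hR
    exact (hsand R hR).2
  -- unconditionality transfer
  set H := dirichletHpNorm Λ p A a with hHdef
  have hHnn : 0 ≤ H := hnorm_nn A a
  have hw_uni : ∀ σ : (∀ n ∈ A, ℕ), ∀ n ∈ A, ‖sigW q A σ n‖ = 1 := by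
    intro σ n hn
    rw [sigW, dif_pos hn]
    exact rootChar_abs q _
  have hL_le : ∀ σ : (∀ n ∈ A, ℕ),
      dirichletHpNorm Λ p A (fun n => sigW q A σ n * a n) ≤ C * H :=
    fun σ => huncond A a (fun n => sigW q A σ n) (hw_uni σ)
  have hH_le : ∀ σ : (∀ n ∈ A, ℕ),
      H ≤ C * dirichletHpNorm Λ p A (fun n => sigW q A σ n * a n) := by
    intro σ
    have h := huncond A (fun n => sigW q A σ n * a n)
      (fun n => (starRingEnd ℂ) (sigW q A σ n))
      (fun n hn => by rw [Complex.norm_conj]; exact hw_uni σ n hn)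
    have heq : (fun n => (starRingEnd ℂ) (sigW q A σ n) * (sigW q A σ n * a n)) = a := by
      funext n
      have hone : sigW q A σ n * (starRingEnd ℂ) (sigW q A σ n) = 1 := by
        rw [sigW]
        split_ifs with hmem
        · exact rootChar_mul_conj q _
        · simp
      calc (starRingEnd ℂ) (sigW q A σ n) * (sigW q A σ n * a n)
          = (sigW q A σ n * (starRingEnd ℂ) (sigW q A σ n)) * a n := by ring
        _ = a n := by rw [hone, one_mul]
      -- done
    rw [heq] at h
    exact h
  -- combine : lower bound
  have hlow2 : T ^ (p/2) / 2 ≤ (C * H) ^ p := by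
    have h1 : ((S.card : ℝ)) * (T ^ (p/2) / 2) ≤ ((S.card : ℝ)) * ((C * H) ^ p) := by
      calc ((S.card : ℝ)) * (T ^ (p/2) / 2) = (S.card : ℝ) * T ^ (p/2) / 2 := by ring
        _ ≤ ∑ σ ∈ S, dirichletHpNorm Λ p A (fun n => sigW q A σ n * a n) ^ p := hlow
        _ ≤ ∑ _σ ∈ S, (C * H) ^ p := Finset.sum_le_sum fun σ _ =>
            Real.rpow_le_rpow (hnorm_nn A _) (hL_le σ) hp0.le
        _ = ((S.card : ℝ)) * ((C * H) ^ p) := by rw [Finset.sum_const, nsmul_eq_mul]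
    exact le_of_mul_le_mul_left h1 hN0
  have hup2 : H ^ p ≤ C ^ p * Kup := by
    have h1 : ((S.card : ℝ)) * (H ^ p) ≤ ((S.card : ℝ)) * (C ^ p * Kup) := by
      calc ((S.card : ℝ)) * (H ^ p) = ∑ _σ ∈ S, H ^ p := by rw [Finset.sum_const, nsmul_eq_mul]
        _ ≤ ∑ σ ∈ S, C ^ p * dirichletHpNorm Λ p A (fun n => sigW q A σ n * a n) ^ p := by
            refine Finset.sum_le_sum fun σ _ => ?_
            calc H ^ p ≤ (C * dirichletHpNorm Λ p A (fun n => sigW q A σ n * a n)) ^ p :=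
                  Real.rpow_le_rpow hHnn (hH_le σ) hp0.le
              _ = C ^ p * dirichletHpNorm Λ p A (fun n => sigW q A σ n * a n) ^ p :=
                  Real.mul_rpow hC0.le (hnorm_nn A _)
        _ = C ^ p * ∑ σ ∈ S, dirichletHpNorm Λ p A (fun n => sigW q A σ n * a n) ^ p := by
            rw [Finset.mul_sum]
        _ ≤ C ^ p * ((S.card : ℝ) * Kup) := mul_le_mul_of_nonneg_left hup (Real.rpow_nonneg hC0.le p)
        _ = ((S.card : ℝ)) * (C ^ p * Kup) := by ring
    exact le_of_mul_le_mul_left h1 hN0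
  constructor
  -- final lower bound
  · have hTp : Real.sqrt T = (T ^ (p/2)) ^ p⁻¹ := by
      rw [← Real.rpow_mul hT0, Real.sqrt_eq_rpow]
      congr 1
      field_simp
    have hmono' : (T ^ (p/2)) ^ p⁻¹ ≤ (2 * (C*H) ^ p) ^ p⁻¹ := by
      refine Real.rpow_le_rpow (Real.rpow_nonneg hT0 _) ?_ (by positivity)
      linarith [hlow2]
    have hrhs : (2 * (C*H) ^ p) ^ p⁻¹ = 2 ^ p⁻¹ * (C * H) := by
      rw [Real.mul_rpow (by norm_num) (Real.rpow_nonneg (by positivity) _),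
        Real.rpow_rpow_inv (by positivity) hp0.ne']
    have h2p : (2:ℝ) ^ p⁻¹ ≤ 2 := by
      calc (2:ℝ) ^ p⁻¹ ≤ (2:ℝ) ^ (1:ℝ) :=
            Real.rpow_le_rpow_of_exponent_le one_le_two (by
              rw [inv_le_one₀ hp0]; exact hp)
        _ = 2 := Real.rpow_one 2
    have hfinal : Real.sqrt T ≤ 2 * C * H := by
      calc Real.sqrt T = (T ^ (p/2)) ^ p⁻¹ := hTp
        _ ≤ 2 ^ p⁻¹ * (C * H) := by rw [← hrhs]; exact hmono'
        _ ≤ 2 * (C * H) := mul_le_mul_of_nonneg_right h2p (by positivity)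
        _ = 2 * C * H := by ring
    calc 1/(2*C) * Real.sqrt T ≤ 1/(2*C) * (2 * C * H) :=
          mul_le_mul_of_nonneg_left hfinal (by positivity)
      _ = H := by field_simp
  -- final upper bound
  · have hH_eq : H = (H ^ p) ^ p⁻¹ := (Real.rpow_rpow_inv hHnn hp0.ne').symm
    have hKpinv : Kup ^ p⁻¹ = (m.factorial : ℝ) ^ ((1:ℝ)/(2*m)) * Real.sqrt T := by
      rw [hKdef, ← Real.rpow_mul (by positivity)]
      have hexp : p / (2*m) * p⁻¹ = (1:ℝ)/(2*m) := by
        field_simp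
      rw [hexp, Real.mul_rpow (by positivity) (by positivity)]
      congr 1
      rw [← Real.rpow_natCast T m, ← Real.rpow_mul hT0, Real.sqrt_eq_rpow]
      congr 1
      have : (2*(m:ℝ)) ≠ 0 := by positivity
      field_simp
    calc H = (H ^ p) ^ p⁻¹ := hH_eq
      _ ≤ (C ^ p * Kup) ^ p⁻¹ :=
          Real.rpow_le_rpow (Real.rpow_nonneg hHnn p) hup2 (by positivity)
      _ = C * Kup ^ p⁻¹ := by
          rw [Real.mul_rpow (Real.rpow_nonneg hC0.le p) hKup0,
            Real.rpow_rpow_inv hC0.le hp0.ne']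
      _ = C * ((m.factorial : ℝ) ^ ((1:ℝ)/(2*m)) * Real.sqrt T) := by rw [hKpinv]
      _ = C * (m.factorial : ℝ) ^ ((1:ℝ)/(2*m)) * Real.sqrt T := by ring
end

section
/- Let λ be a frequency and k ∈ ℕ. Suppose the canonical basis {e^{-λ_n s}} is democratic in H_{2k}^λ: there exists D > 0 such that for all finite sets A, B ⊆ ℕ with |A| ≤ |B|, ‖∑_{n∈A} e^{-λ_n s}‖_{H_{2k}^λ} ≤ D·‖∑_{n∈B} e^{-λ_n s}‖_{H_{2k}^λ}. Then there exists a constant C > 0 such that for every finite set A ⊆ ℕ and all complex coefficients (a_n)_{n∈A}: (∑_{n∈A} |a_n|²)^{1/2} ≤ ‖∑_{n∈A} a_n e^{-λ_n s}‖_{H_{2k}^λ} ≤ C·log(|A| + 1)·(∑_{n∈A} |a_n|²)^{1/2}. -/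
open MeasureTheory Filter Finset

noncomputable section
namespace DirAux
open Complex
open scoped ENNReal NNReal


variable (Λ : ℕ → ℝ)

/-- sum of frequencies along a tuple -/
def SS (K : ℕ) (u : Fin K → ℕ) : ℝ := ∑ j, Λ (u j)

/-- the limit of `(1/2R)∫ |F|^{2K}` -/
def Phi (K : ℕ) (A : Finset ℕ) (a : ℕ → ℂ) : ℝ :=
  ∑ u ∈ Fintype.piFinset (fun _ : Fin K => A),
    ∑ v ∈ Fintype.piFinset (fun _ : Fin K => A),
      if SS Λ K u = SS Λ K v then
        ((∏ j, a (u j)) * (starRingEnd ℂ) (∏ j, a (v j))).re else 0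

lemma expand (K : ℕ) (A : Finset ℕ) (a : ℕ → ℂ) (t : ℝ) :
    ‖∑ n ∈ A, a n * Complex.exp (-(Complex.I * (Λ n * t)))‖ ^ ((2 * K : ℕ) : ℝ)
      = (∑ u ∈ Fintype.piFinset (fun _ : Fin K => A),
         ∑ v ∈ Fintype.piFinset (fun _ : Fin K => A),
           (∏ j, a (u j)) * (starRingEnd ℂ) (∏ j, a (v j))
             * Complex.exp (-(Complex.I * (((SS Λ K u - SS Λ K v) : ℝ) * t)))).re := by
  set z : ℂ := ∑ n ∈ A, a n * Complex.exp (-(Complex.I * (Λ n * t))) with hz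
  have h1 : ‖z‖ ^ ((2 * K : ℕ) : ℝ) = Complex.normSq z ^ K := by
    rw [Real.rpow_natCast, pow_mul, Complex.sq_norm]
  have h2 : (Complex.normSq z ^ K : ℝ) = (z ^ K * (starRingEnd ℂ) z ^ K).re := by
    rw [← mul_pow, Complex.mul_conj, ← Complex.ofReal_pow, Complex.ofReal_re]
  have h3 : z ^ K = ∑ u ∈ Fintype.piFinset (fun _ : Fin K => A),
      (∏ j, a (u j)) * Complex.exp (-(Complex.I * (SS Λ K u * t))) := by
    have : z ^ K = ∏ _j : Fin K, z := by simp
    rw [this, hz, Finset.prod_univ_sum]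
    refine Finset.sum_congr rfl fun u _ => ?_
    rw [Finset.prod_mul_distrib, ← Complex.exp_sum]
    congr 1
    rw [SS]
    push_cast
    rw [Finset.sum_mul, Finset.mul_sum, ← Finset.sum_neg_distrib]
  have h4 : (starRingEnd ℂ) z ^ K = ∑ v ∈ Fintype.piFinset (fun _ : Fin K => A),
      (starRingEnd ℂ) (∏ j, a (v j)) * Complex.exp (Complex.I * (SS Λ K v * t)) := by
    rw [← map_pow, h3, map_sum]
    refine Finset.sum_congr rfl fun v _ => ?_
    rw [map_mul, ← Complex.exp_conj]
    congr 1
    simp only [map_neg, map_mul, Complex.conj_I, Complex.conj_ofReal]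
    push_cast
    ring
  rw [h1, h2, h3, h4, Finset.sum_mul_sum]
  congr 1
  refine Finset.sum_congr rfl fun u _ => Finset.sum_congr rfl fun v _ => ?_
  rw [mul_mul_mul_comm, ← Complex.exp_add]
  congr 2
  push_cast
  ring


lemma tendsto_avg_exp (θ : ℝ) :
    Tendsto (fun R : ℝ => (1/(2*R) : ℝ) • ∫ t in (-R)..R, Complex.exp (-(Complex.I * (θ * t))))
      atTop (nhds (if θ = 0 then 1 else 0)) := by
  by_cases hθ : θ = 0
  · rw [if_pos hθ]
    apply Tendsto.congr' (f₁ := fun _ => (1:ℂ)) _ tendsto_const_nhds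
    filter_upwards [eventually_gt_atTop (0:ℝ)] with R hR
    subst hθ
    have h2R : (2*R) ≠ 0 := by positivity
    simp only [Complex.ofReal_zero, zero_mul, mul_zero, neg_zero, Complex.exp_zero,
      intervalIntegral.integral_const, smul_smul, sub_neg_eq_add]
    rw [show (1/(2*R)) * (R + R) = 1 by field_simp; ring, one_smul]
  · rw [if_neg hθ]
    have hc : (-(Complex.I * θ) : ℂ) ≠ 0 := by
      simp [Complex.I_ne_zero, Complex.ofReal_eq_zero, hθ]
    have hint : ∀ R : ℝ, ∫ t in (-R)..R, Complex.exp (-(Complex.I * (θ * t)))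
        = (Complex.exp (-(Complex.I * θ) * R) - Complex.exp (-(Complex.I * θ) * (-R)))
            / (-(Complex.I * θ)) := by
      intro R
      rw [show (fun t : ℝ => Complex.exp (-(Complex.I * (θ * t))))
          = fun t : ℝ => Complex.exp (-(Complex.I * θ) * t) by
        funext t; congr 1; push_cast; ring]
      rw [integral_exp_mul_complex hc]
      push_cast
      ring_nf
    have hnorm : ∀ R : ℝ, ‖(1/(2*R) : ℝ) • ∫ t in (-R)..R, Complex.exp (-(Complex.I * (θ * t)))‖
        ≤ ‖(1/(2*R) : ℝ)‖ * (2 / ‖(-(Complex.I * θ) : ℂ)‖) := by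
      intro R
      rw [hint R, norm_smul]
      gcongr
      rw [norm_div]
      gcongr
      refine (norm_sub_le _ _).trans ?_
      have he : ∀ s : ℝ, ‖Complex.exp (-(Complex.I * θ) * s)‖ = 1 := by
        intro s
        rw [Complex.norm_exp]
        have : ((-(Complex.I * θ) * s : ℂ)).re = 0 := by
          simp [Complex.mul_re]
        rw [this, Real.exp_zero]
      have h2 := he (-R)
      push_cast at h2
      rw [he R, h2]; norm_num
    refine squeeze_zero_norm hnorm ?_
    have h1 : Tendsto (fun R : ℝ => (1/(2*R) : ℝ)) atTop (nhds 0) := by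
      have := (tendsto_id.const_mul_atTop (show (0:ℝ) < 2 by norm_num)).inv_tendsto_atTop
      refine this.congr fun R => ?_
      simp [one_div, mul_comm]
    have h2 := ((continuous_norm.tendsto (0:ℝ)).comp h1).mul_const
      (2 / ‖(-(Complex.I * θ) : ℂ)‖)
    simp only [Function.comp_def, norm_zero, zero_mul] at h2
    exact h2


lemma tendsto_X (Λ : ℕ → ℝ) (K : ℕ) (A : Finset ℕ) (a : ℕ → ℂ) :
    Tendsto (fun R : ℝ => (1/(2*R)) * ∫ t in (-R)..R,
        ‖∑ n ∈ A, a n * Complex.exp (-(Complex.I * (Λ n * t)))‖ ^ ((2*K : ℕ) : ℝ))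
      atTop (nhds (Phi Λ K A a)) := by
  set P := Fintype.piFinset (fun _ : Fin K => A) with hP
  set c : (Fin K → ℕ) → (Fin K → ℕ) → ℂ :=
    fun u v => (∏ j, a (u j)) * (starRingEnd ℂ) (∏ j, a (v j)) with hc
  have key : ∀ R : ℝ, (1/(2*R)) * (∫ t in (-R)..R,
        ‖∑ n ∈ A, a n * Complex.exp (-(Complex.I * (Λ n * t)))‖ ^ ((2*K : ℕ) : ℝ))
      = (∑ u ∈ P, ∑ v ∈ P, c u v *
          ((1/(2*R) : ℝ) • ∫ t in (-R)..R,
            Complex.exp (-(Complex.I * (((SS Λ K u - SS Λ K v) : ℝ) * t))))).re := by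
    intro R
    have hcont : ∀ (θ : ℝ), Continuous fun t : ℝ => Complex.exp (-(Complex.I * (θ * t))) := by
      intro θ; fun_prop
    have h1 : (∫ t in (-R)..R,
        ‖∑ n ∈ A, a n * Complex.exp (-(Complex.I * (Λ n * t)))‖ ^ ((2*K : ℕ) : ℝ))
        = ∫ t in (-R)..R, (∑ u ∈ P, ∑ v ∈ P, c u v *
            Complex.exp (-(Complex.I * (((SS Λ K u - SS Λ K v) : ℝ) * t)))).re := by
      refine intervalIntegral.integral_congr fun t _ => ?_
      exact expand Λ K A a t
    rw [h1]
    have h2 : (∫ t in (-R)..R, (∑ u ∈ P, ∑ v ∈ P, c u v *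
            Complex.exp (-(Complex.I * (((SS Λ K u - SS Λ K v) : ℝ) * t)))).re)
        = (∫ t in (-R)..R, (∑ u ∈ P, ∑ v ∈ P, c u v *
            Complex.exp (-(Complex.I * (((SS Λ K u - SS Λ K v) : ℝ) * t))))).re := by
      have hint : IntervalIntegrable (fun t : ℝ => (∑ u ∈ P, ∑ v ∈ P, c u v *
          Complex.exp (-(Complex.I * (((SS Λ K u - SS Λ K v) : ℝ) * t))))) volume (-R) R := by
        apply Continuous.intervalIntegrable
        fun_prop
      exact (Complex.reCLM.intervalIntegral_comp_comm hint)
    have houter : ∀ u ∈ P, IntervalIntegrable (fun t : ℝ => ∑ v ∈ P, c u v *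
        Complex.exp (-(Complex.I * (((SS Λ K u - SS Λ K v) : ℝ) * t)))) volume (-R) R := by
      intro u _; apply Continuous.intervalIntegrable; fun_prop
    have h3 : ∀ u ∈ P, (∫ x in (-R)..R, ∑ v ∈ P, c u v *
        Complex.exp (-(Complex.I * (((SS Λ K u - SS Λ K v) : ℝ) * x))))
        = ∑ v ∈ P, c u v * ∫ x in (-R)..R,
            Complex.exp (-(Complex.I * (((SS Λ K u - SS Λ K v) : ℝ) * x))) := by
      intro u _
      have hinner : ∀ v ∈ P, IntervalIntegrable (fun t : ℝ => c u v *
          Complex.exp (-(Complex.I * (((SS Λ K u - SS Λ K v) : ℝ) * t)))) volume (-R) R := by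
        intro v _; apply Continuous.intervalIntegrable; fun_prop
      rw [intervalIntegral.integral_finset_sum hinner]
      exact Finset.sum_congr rfl fun v _ => intervalIntegral.integral_const_mul _ _
    rw [h2, intervalIntegral.integral_finset_sum houter, Finset.sum_congr rfl h3]
    simp only [mul_smul_comm, ← Finset.smul_sum, Complex.smul_re, smul_eq_mul]
  have hlim : Tendsto (fun R : ℝ => (∑ u ∈ P, ∑ v ∈ P, c u v *
      ((1/(2*R) : ℝ) • ∫ t in (-R)..R,
        Complex.exp (-(Complex.I * (((SS Λ K u - SS Λ K v) : ℝ) * t)))))) atTop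
      (nhds (∑ u ∈ P, ∑ v ∈ P, c u v * (if SS Λ K u - SS Λ K v = 0 then 1 else 0))) := by
    refine tendsto_finset_sum _ fun u _ => tendsto_finset_sum _ fun v _ => ?_
    exact (tendsto_avg_exp (SS Λ K u - SS Λ K v)).const_mul (c u v)
  have hre := (Complex.continuous_re.tendsto _).comp hlim
  have hval : (∑ u ∈ P, ∑ v ∈ P, c u v * (if SS Λ K u - SS Λ K v = 0 then 1 else 0)).re
      = Phi Λ K A a := by
    rw [Phi, Complex.re_sum]
    refine Finset.sum_congr rfl fun u _ => ?_
    rw [Complex.re_sum]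
    refine Finset.sum_congr rfl fun v _ => ?_
    by_cases h : SS Λ K u = SS Λ K v
    · rw [if_pos h, if_pos (by rw [h, sub_self]), mul_one]
    · rw [if_neg h, if_neg (fun hh => h (sub_eq_zero.mp hh)), mul_zero, Complex.zero_re]
  rw [hval] at hre
  exact hre.congr fun R => (key R).symm

lemma Phi_one (Λ : ℕ → ℝ) (hmono : StrictMono Λ) (A : Finset ℕ) (a : ℕ → ℂ) :
    Phi Λ 1 A a = ∑ n ∈ A, ‖a n‖ ^ 2 := by
  rw [Phi]
  have hcond : ∀ u v : Fin 1 → ℕ, (SS Λ 1 u = SS Λ 1 v) ↔ u = v := by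
    intro u v
    simp only [SS, Fin.sum_univ_one]
    constructor
    · intro h
      funext j
      have := hmono.injective h
      have hj : j = 0 := Subsingleton.elim _ _
      rw [hj]; exact this
    · intro h; rw [h]
  have h1 : ∀ u : Fin 1 → ℕ,
      ((∏ j, a (u j)) * (starRingEnd ℂ) (∏ j, a (u j))).re = ‖a (u 0)‖ ^ 2 := by
    intro u
    rw [Fin.prod_univ_one, Complex.mul_conj, ← Complex.normSq_eq_norm_sq, Complex.ofReal_re]
  rw [show (∑ u ∈ Fintype.piFinset (fun _ : Fin 1 => A),
      ∑ v ∈ Fintype.piFinset (fun _ : Fin 1 => A),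
        if SS Λ 1 u = SS Λ 1 v then
          ((∏ j, a (u j)) * (starRingEnd ℂ) (∏ j, a (v j))).re else 0)
      = ∑ u ∈ Fintype.piFinset (fun _ : Fin 1 => A), ‖a (u 0)‖ ^ 2 from ?_]
  · refine Finset.sum_bij' (fun u _ => u 0) (fun n _ => fun _ => n) ?_ ?_ ?_ ?_ ?_
    · intro u hu; exact (Fintype.mem_piFinset.mp hu) 0
    · intro n hn; exact Fintype.mem_piFinset.mpr fun _ => hn
    · intro u hu; funext j; have hj : j = 0 := Subsingleton.elim _ _; rw [hj]
    · intro n hn; rfl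
    · intro u hu; rfl
  · refine Finset.sum_congr rfl fun u hu => ?_
    have hcongr : ∀ v ∈ Fintype.piFinset (fun _ : Fin 1 => A),
        (if SS Λ 1 u = SS Λ 1 v then
          ((∏ j, a (u j)) * (starRingEnd ℂ) (∏ j, a (v j))).re else 0)
        = if u = v then ((∏ j, a (u j)) * (starRingEnd ℂ) (∏ j, a (v j))).re else 0 := by
      intro v _; exact if_congr (hcond u v) rfl rfl
    rw [Finset.sum_congr rfl hcongr, Finset.sum_ite_eq _ u _, if_pos hu]
    exact h1 u

lemma Phi_le (Λ : ℕ → ℝ) (k : ℕ) (A : Finset ℕ) (a : ℕ → ℂ) (c : ℝ) (hc0 : 0 ≤ c)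
    (hc : ∀ n ∈ A, ‖a n‖ ≤ c) :
    Phi Λ k A a ≤ c ^ (2 * k) * Phi Λ k A (fun _ => 1) := by
  rw [Phi, Phi, Finset.mul_sum]
  refine Finset.sum_le_sum fun u hu => ?_
  rw [Finset.mul_sum]
  refine Finset.sum_le_sum fun v hv => ?_
  by_cases h : SS Λ k u = SS Λ k v
  · rw [if_pos h, if_pos h]
    have habs : ((∏ j, a (u j)) * (starRingEnd ℂ) (∏ j, a (v j))).re ≤ c ^ (2 * k) := by
      refine (Complex.re_le_norm _).trans ?_
      rw [norm_mul, Complex.norm_conj, norm_prod, norm_prod]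
      have h1 : ∏ j, ‖a (u j)‖ ≤ c ^ k := by
        calc ∏ j, ‖a (u j)‖ ≤ ∏ _j : Fin k, c :=
              Finset.prod_le_prod (fun j _ => norm_nonneg _)
                (fun j _ => hc _ (Fintype.mem_piFinset.mp hu j))
          _ = c ^ k := by simp
      have h2 : ∏ j, ‖a (v j)‖ ≤ c ^ k := by
        calc ∏ j, ‖a (v j)‖ ≤ ∏ _j : Fin k, c :=
              Finset.prod_le_prod (fun j _ => norm_nonneg _)
                (fun j _ => hc _ (Fintype.mem_piFinset.mp hv j))
          _ = c ^ k := by simp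
      calc (∏ j, ‖a (u j)‖) * ∏ j, ‖a (v j)‖
          ≤ c ^ k * c ^ k := by
            exact mul_le_mul h1 h2 (Finset.prod_nonneg fun j _ => norm_nonneg _)
              (pow_nonneg hc0 _)
        _ = c ^ (2 * k) := by rw [← pow_add, two_mul]
    simpa using habs
  · rw [if_neg h, if_neg h]; simp

lemma Phi_one_nonneg (Λ : ℕ → ℝ) (k : ℕ) (A : Finset ℕ) :
    0 ≤ Phi Λ k A (fun _ => 1) := by
  rw [Phi]
  refine Finset.sum_nonneg fun u _ => Finset.sum_nonneg fun v _ => ?_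
  by_cases h : SS Λ k u = SS Λ k v
  · rw [if_pos h]; simp
  · rw [if_neg h]

/-- the uniform probability measure on `[-R, R]` -/
def muR (R : ℝ) : Measure ℝ :=
  (ENNReal.ofReal (1/(2*R))) • (volume.restrict (Set.Ioc (-R) R))

lemma muR_prob {R : ℝ} (hR : 0 < R) : IsProbabilityMeasure (muR R) := by
  constructor
  rw [muR, Measure.smul_apply, Measure.restrict_apply MeasurableSet.univ, Set.univ_inter,
    Real.volume_Ioc, smul_eq_mul, ← ENNReal.ofReal_mul (by positivity)]
  rw [show (1/(2*R)) * (R - -R) = 1 by field_simp; ring, ENNReal.ofReal_one]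

lemma lint_eq {R : ℝ} (hR : 0 < R) (q : ℝ) (hq : 0 < q) (f : ℝ → ℂ) (hf : Continuous f) :
    ∫⁻ t, ‖f t‖ₑ ^ q ∂(muR R)
      = ENNReal.ofReal ((1/(2*R)) * ∫ t in (-R)..R, ‖f t‖ ^ q) := by
  have hle : -R ≤ R := by linarith
  have hcont : Continuous fun t => ‖f t‖ ^ q :=
    (continuous_norm.comp hf).rpow_const (fun x => Or.inr hq.le)
  have hI : IntegrableOn (fun t => ‖f t‖ ^ q) (Set.Ioc (-R) R) volume :=
    hcont.integrableOn_Ioc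
  rw [muR, lintegral_smul_measure, intervalIntegral.integral_of_le hle]
  have h2 : ∫⁻ t in Set.Ioc (-R) R, ‖f t‖ₑ ^ q ∂volume
      = ∫⁻ t in Set.Ioc (-R) R, ENNReal.ofReal (‖f t‖ ^ q) ∂volume := by
    refine lintegral_congr fun t => ?_
    rw [← ofReal_norm_eq_enorm, ENNReal.ofReal_rpow_of_nonneg (norm_nonneg _) hq.le]
  rw [h2, ← MeasureTheory.ofReal_integral_eq_lintegral_ofReal hI
    (Filter.Eventually.of_forall fun t => Real.rpow_nonneg (norm_nonneg _) q),
    smul_eq_mul, ← ENNReal.ofReal_mul (by positivity)]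

lemma MpR_eq {R : ℝ} (hR : 0 < R) (q : ℝ) (hq : 0 < q) (f : ℝ → ℂ) (hf : Continuous f) :
    ((1/(2*R)) * ∫ t in (-R)..R, ‖f t‖ ^ q) ^ (1/q)
      = (eLpNorm f (ENNReal.ofReal q) (muR R)).toReal := by
  have hle : -R ≤ R := by linarith
  have hX : 0 ≤ (1/(2*R)) * ∫ t in (-R)..R, ‖f t‖ ^ q := by
    apply mul_nonneg (by positivity)
    exact intervalIntegral.integral_nonneg hle
      (fun t _ => Real.rpow_nonneg (norm_nonneg _) q)
  rw [eLpNorm_eq_lintegral_rpow_enorm_toReal (by simp [hq]) (by simp),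
    ENNReal.toReal_ofReal hq.le, lint_eq hR q hq f hf, ← ENNReal.toReal_rpow,
    ENNReal.toReal_ofReal hX]

lemma eLp_ne_top {R : ℝ} (hR : 0 < R) (q : ℝ) (hq : 0 < q) (f : ℝ → ℂ) (hf : Continuous f) :
    eLpNorm f (ENNReal.ofReal q) (muR R) ≠ ⊤ := by
  rw [eLpNorm_eq_lintegral_rpow_enorm_toReal (by simp [hq]) (by simp),
    ENNReal.toReal_ofReal hq.le, lint_eq hR q hq f hf]
  exact ENNReal.rpow_ne_top_of_nonneg (by positivity) ENNReal.ofReal_ne_top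

lemma Fcont (Λ : ℕ → ℝ) (A : Finset ℕ) (a : ℕ → ℂ) :
    Continuous (fun t : ℝ => ∑ n ∈ A, a n * Complex.exp (-(Complex.I * (Λ n * t)))) := by
  fun_prop

lemma M_eq_eLp (Λ : ℕ → ℝ) {R : ℝ} (hR : 0 < R) (q : ℝ) (hq : 0 < q) (A : Finset ℕ)
    (a : ℕ → ℂ) :
    dirichletMpR Λ q A a R = (eLpNorm
      (fun t : ℝ => ∑ n ∈ A, a n * Complex.exp (-(Complex.I * (Λ n * t))))
      (ENNReal.ofReal q) (muR R)).toReal := by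
  simp only [dirichletMpR]
  exact MpR_eq hR q hq _ (Fcont Λ A a)

lemma H_nonneg (Λ : ℕ → ℝ) (p : ℝ) {A : Finset ℕ} {a : ℕ → ℂ}
    (hl : Tendsto (dirichletMpR Λ p A a) atTop (nhds (dirichletHpNorm Λ p A a))) :
    0 ≤ dirichletHpNorm Λ p A a := by
  refine ge_of_tendsto hl ?_
  filter_upwards [eventually_gt_atTop (0:ℝ)] with R hR
  exact Real.rpow_nonneg (mul_nonneg (by positivity)
    (intervalIntegral.integral_nonneg (by linarith)
      (fun t _ => Real.rpow_nonneg (norm_nonneg _) _))) _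

lemma H_pow (Λ : ℕ → ℝ) {k : ℕ} (hk : 1 ≤ k) {A : Finset ℕ} {a : ℕ → ℂ}
    (hl : Tendsto (dirichletMpR Λ (2*(k:ℝ)) A a) atTop
      (nhds (dirichletHpNorm Λ (2*(k:ℝ)) A a))) :
    dirichletHpNorm Λ (2*(k:ℝ)) A a ^ (2*k) = Phi Λ k A a := by
  have h2k : ((2*k:ℕ):ℝ) = 2*(k:ℝ) := by push_cast; ring
  have hX := tendsto_X Λ k A a
  have h1 := hl.pow (2*k)
  refine tendsto_nhds_unique (h1.congr' ?_) hX
  filter_upwards [eventually_gt_atTop (0:ℝ)] with R hR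
  have hXnn : 0 ≤ (1/(2*R)) * ∫ t in (-R)..R,
      ‖∑ n ∈ A, a n * Complex.exp (-(Complex.I * (Λ n * t)))‖ ^ ((2*k:ℕ):ℝ) :=
    mul_nonneg (by positivity) (intervalIntegral.integral_nonneg (by linarith)
      (fun t _ => Real.rpow_nonneg (norm_nonneg _) _))
  simp only [dirichletMpR, ← h2k]
  rw [← Real.rpow_natCast (((1/(2*R)) * ∫ t in (-R)..R,
      ‖∑ n ∈ A, a n * Complex.exp (-(Complex.I * (Λ n * t)))‖
        ^ ((2*k:ℕ):ℝ)) ^ (1/((2*k:ℕ):ℝ))) (2*k), ← Real.rpow_mul hXnn]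
  have h2kpos : (0:ℝ) < ((2*k:ℕ):ℝ) := by exact_mod_cast (by omega : 0 < 2*k)
  rw [show (1/((2*k:ℕ):ℝ)) * ((2*k:ℕ):ℝ) = 1 from one_div_mul_cancel h2kpos.ne']
  exact Real.rpow_one _

lemma H_lower (Λ : ℕ → ℝ) (hmono : StrictMono Λ) {k : ℕ} (hk : 1 ≤ k) {A : Finset ℕ}
    {a : ℕ → ℂ}
    (hl : Tendsto (dirichletMpR Λ (2*(k:ℝ)) A a) atTop
      (nhds (dirichletHpNorm Λ (2*(k:ℝ)) A a))) :
    Real.sqrt (∑ n ∈ A, ‖a n‖ ^ 2) ≤ dirichletHpNorm Λ (2*(k:ℝ)) A a := by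
  have hX2 := tendsto_X Λ 1 A a
  have hs := (Real.continuous_sqrt.tendsto _).comp hX2
  rw [Phi_one Λ hmono] at hs
  refine le_of_tendsto_of_tendsto hs hl ?_
  filter_upwards [eventually_gt_atTop (0:ℝ)] with R hR
  have hk1 : (1:ℝ) ≤ (k:ℝ) := by exact_mod_cast hk
  have h2 : Real.sqrt ((1/(2*R)) * ∫ t in (-R)..R,
      ‖∑ n ∈ A, a n * Complex.exp (-(Complex.I * (Λ n * t)))‖ ^ ((2*1:ℕ):ℝ))
      = (eLpNorm (fun t : ℝ => ∑ n ∈ A, a n * Complex.exp (-(Complex.I * (Λ n * t))))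
          (ENNReal.ofReal ((2*1:ℕ):ℝ)) (muR R)).toReal := by
    rw [Real.sqrt_eq_rpow, show (1/2:ℝ) = 1/(((2*1:ℕ):ℝ)) by norm_num]
    exact MpR_eq hR _ (by norm_num) _ (Fcont Λ A a)
  show Real.sqrt _ ≤ _
  rw [h2, M_eq_eLp Λ hR (2*(k:ℝ)) (by positivity) A a]
  haveI := muR_prob hR
  refine ENNReal.toReal_mono (eLp_ne_top hR _ (by positivity) _ (Fcont Λ A a)) ?_
  refine eLpNorm_le_eLpNorm_of_exponent_le (ENNReal.ofReal_le_ofReal (by push_cast; linarith))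
    (Fcont Λ A a).aestronglyMeasurable

lemma M_union (Λ : ℕ → ℝ) {k : ℕ} (hk : 1 ≤ k) {R : ℝ} (hR : 0 < R) {A B : Finset ℕ}
    (hAB : Disjoint A B) (a : ℕ → ℂ) :
    dirichletMpR Λ (2*(k:ℝ)) (A ∪ B) a R
      ≤ dirichletMpR Λ (2*(k:ℝ)) A a R + dirichletMpR Λ (2*(k:ℝ)) B a R := by
  have hk1 : (1:ℝ) ≤ (k:ℝ) := by exact_mod_cast hk
  have hq : (0:ℝ) < 2*(k:ℝ) := by linarith
  rw [M_eq_eLp Λ hR _ hq, M_eq_eLp Λ hR _ hq, M_eq_eLp Λ hR _ hq]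
  haveI := muR_prob hR
  have hsum : (fun t : ℝ => ∑ n ∈ A ∪ B, a n * Complex.exp (-(Complex.I * (Λ n * t))))
      = (fun t : ℝ => ∑ n ∈ A, a n * Complex.exp (-(Complex.I * (Λ n * t))))
        + (fun t : ℝ => ∑ n ∈ B, a n * Complex.exp (-(Complex.I * (Λ n * t)))) := by
    funext t
    exact Finset.sum_union hAB
  rw [hsum]
  have hadd := eLpNorm_add_le (μ := muR R) (Fcont Λ A a).aestronglyMeasurable
    (Fcont Λ B a).aestronglyMeasurable
    (show (1:ℝ≥0∞) ≤ ENNReal.ofReal (2*(k:ℝ)) by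
      rw [← ENNReal.ofReal_one]; exact ENNReal.ofReal_le_ofReal (by linarith))
  have hne1 := eLp_ne_top hR _ hq _ (Fcont Λ A a)
  have hne2 := eLp_ne_top hR _ hq _ (Fcont Λ B a)
  calc (eLpNorm _ _ (muR R)).toReal
      ≤ ((eLpNorm (fun t : ℝ => ∑ n ∈ A, a n * Complex.exp (-(Complex.I * (Λ n * t))))
          (ENNReal.ofReal (2*(k:ℝ))) (muR R))
        + (eLpNorm (fun t : ℝ => ∑ n ∈ B, a n * Complex.exp (-(Complex.I * (Λ n * t))))
          (ENNReal.ofReal (2*(k:ℝ))) (muR R))).toReal := by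
        exact ENNReal.toReal_mono (ENNReal.add_ne_top.mpr ⟨hne1, hne2⟩) hadd
    _ = _ := ENNReal.toReal_add hne1 hne2

lemma H_union (Λ : ℕ → ℝ) {k : ℕ} (hk : 1 ≤ k) {A B : Finset ℕ} (hAB : Disjoint A B)
    (a : ℕ → ℂ)
    (hlU : Tendsto (dirichletMpR Λ (2*(k:ℝ)) (A ∪ B) a) atTop
      (nhds (dirichletHpNorm Λ (2*(k:ℝ)) (A ∪ B) a)))
    (hlA : Tendsto (dirichletMpR Λ (2*(k:ℝ)) A a) atTop
      (nhds (dirichletHpNorm Λ (2*(k:ℝ)) A a)))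
    (hlB : Tendsto (dirichletMpR Λ (2*(k:ℝ)) B a) atTop
      (nhds (dirichletHpNorm Λ (2*(k:ℝ)) B a))) :
    dirichletHpNorm Λ (2*(k:ℝ)) (A ∪ B) a
      ≤ dirichletHpNorm Λ (2*(k:ℝ)) A a + dirichletHpNorm Λ (2*(k:ℝ)) B a := by
  refine le_of_tendsto_of_tendsto hlU (hlA.add hlB) ?_
  filter_upwards [eventually_gt_atTop (0:ℝ)] with R hR
  exact M_union Λ hk hR hAB a

lemma H_coef (Λ : ℕ → ℝ) {k : ℕ} (hk : 1 ≤ k) {A : Finset ℕ} {a : ℕ → ℂ} {c : ℝ}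
    (hc0 : 0 ≤ c) (hc : ∀ n ∈ A, ‖a n‖ ≤ c)
    (hlA : Tendsto (dirichletMpR Λ (2*(k:ℝ)) A a) atTop
      (nhds (dirichletHpNorm Λ (2*(k:ℝ)) A a)))
    (hlA1 : Tendsto (dirichletMpR Λ (2*(k:ℝ)) A (fun _ => 1)) atTop
      (nhds (dirichletHpNorm Λ (2*(k:ℝ)) A (fun _ => 1)))) :
    dirichletHpNorm Λ (2*(k:ℝ)) A a ≤ c * dirichletHpNorm Λ (2*(k:ℝ)) A (fun _ => 1) := by
  have h1 := H_pow Λ hk hlA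
  have h2 := H_pow Λ hk hlA1
  have hn1 := H_nonneg Λ (2*(k:ℝ)) hlA
  have hn2 := H_nonneg Λ (2*(k:ℝ)) hlA1
  refine le_of_pow_le_pow_left₀ (n := 2*k) (by omega) (mul_nonneg hc0 hn2) ?_
  rw [mul_pow, h1, h2]
  exact Phi_le Λ k A a c hc0 hc

lemma counts_lemma (k : ℕ) (w : ℕ → ℝ) (hw : ∀ j, 0 < w j)
    (hsup : ∀ j, (k:ℝ) * ∑ i ∈ Finset.range j, w i < w j) :
    ∀ (m : ℕ) (c d : ℕ → ℕ), (∀ i, c i ≤ k) → (∀ i, d i ≤ k) →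
      (∑ i ∈ Finset.range m, (c i : ℝ) * w i) = (∑ i ∈ Finset.range m, (d i : ℝ) * w i) →
      ∀ i < m, c i = d i := by
  intro m
  induction m with
  | zero => intro c d _ _ _ i hi; exact absurd hi (Nat.not_lt_zero i)
  | succ m ih =>
    intro c d hc hd h i hi
    have hWc : ∑ i ∈ Finset.range m, (c i:ℝ) * w i ≤ (k:ℝ) * ∑ i ∈ Finset.range m, w i := by
      rw [Finset.mul_sum]
      exact Finset.sum_le_sum fun i _ =>
        mul_le_mul_of_nonneg_right (by exact_mod_cast hc i) (hw i).le
    have hWd : ∑ i ∈ Finset.range m, (d i:ℝ) * w i ≤ (k:ℝ) * ∑ i ∈ Finset.range m, w i := by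
      rw [Finset.mul_sum]
      exact Finset.sum_le_sum fun i _ =>
        mul_le_mul_of_nonneg_right (by exact_mod_cast hd i) (hw i).le
    have hc0 : (0:ℝ) ≤ ∑ i ∈ Finset.range m, (c i:ℝ) * w i :=
      Finset.sum_nonneg fun i _ => mul_nonneg (by positivity) (hw i).le
    have hd0 : (0:ℝ) ≤ ∑ i ∈ Finset.range m, (d i:ℝ) * w i :=
      Finset.sum_nonneg fun i _ => mul_nonneg (by positivity) (hw i).le
    rw [Finset.sum_range_succ, Finset.sum_range_succ] at h
    have hsm := hsup m
    have hcm : c m = d m := by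
      by_contra hne
      rcases Nat.lt_or_ge (c m) (d m) with hlt | hge
      · have h1 : ((c m : ℝ) + 1) * w m ≤ (d m : ℝ) * w m := by
          refine mul_le_mul_of_nonneg_right ?_ (hw m).le
          exact_mod_cast hlt
        nlinarith [hw m]
      · have hlt' : d m < c m := lt_of_le_of_ne hge (fun hh => hne hh.symm)
        have h1 : ((d m : ℝ) + 1) * w m ≤ (c m : ℝ) * w m := by
          refine mul_le_mul_of_nonneg_right ?_ (hw m).le
          exact_mod_cast hlt'
        nlinarith [hw m]
    have h' : (∑ i ∈ Finset.range m, (c i:ℝ) * w i)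
        = ∑ i ∈ Finset.range m, (d i:ℝ) * w i := by
      rw [hcm] at h; linarith
    rcases Nat.lt_succ_iff_lt_or_eq.mp hi with hlt | heq
    · exact ih c d hc hd h' i hlt
    · rw [heq]; exact hcm

lemma exists_good (Λ : ℕ → ℝ) (hmono : StrictMono Λ) (hunb : Tendsto Λ atTop atTop)
    (k : ℕ) (hk : 1 ≤ k) (m : ℕ) :
    ∃ B : Finset ℕ, B.card = m ∧ Phi Λ k B (fun _ => 1) ≤ ((k:ℝ))^k * (m:ℝ)^k := by
  classical
  have key : ∀ (c : ℝ) (n₀ : ℕ), ∃ n, n₀ < n ∧ c < Λ n := by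
    intro c n₀
    exact ((eventually_gt_atTop n₀).and (hunb.eventually (eventually_gt_atTop c))).exists
  let κ : ℕ → ℕ := fun n => (key (((k:ℝ)+1) * Λ n) n).choose
  have hκ1 : ∀ n, n < κ n := fun n => (key (((k:ℝ)+1) * Λ n) n).choose_spec.1
  have hκ2 : ∀ n, ((k:ℝ)+1) * Λ n < Λ (κ n) := fun n => (key (((k:ℝ)+1) * Λ n) n).choose_spec.2
  obtain ⟨n₀, hn₀⟩ := (hunb.eventually (eventually_gt_atTop (0:ℝ))).exists
  let e : ℕ → ℕ := fun j => κ^[j] n₀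
  have hes : ∀ j, e (j+1) = κ (e j) := fun j => Function.iterate_succ_apply' κ j n₀
  have he0 : 0 < Λ (e 0) := by simpa [e] using hn₀
  have hegrow : ∀ j, ((k:ℝ)+1) * Λ (e j) < Λ (e (j+1)) := fun j => by
    rw [hes]; exact hκ2 (e j)
  have hwpos : ∀ j, 0 < Λ (e j) := by
    intro j
    induction j with
    | zero => exact he0
    | succ j ihj =>
      have := hegrow j
      nlinarith [Nat.cast_nonneg (α := ℝ) k]
  have hemono : StrictMono e := strictMono_nat_of_lt_succ (fun n => by rw [hes]; exact hκ1 (e n))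
  set w : ℕ → ℝ := fun j => Λ (e j) with hw
  have hsup : ∀ j, (k:ℝ) * ∑ i ∈ Finset.range j, w i < w j := by
    intro j
    induction j with
    | zero => simpa using hwpos 0
    | succ j ihj =>
      rw [Finset.sum_range_succ, mul_add]
      have := hegrow j
      have hwj := hwpos j
      simp only [hw] at *
      nlinarith
  set B := (Finset.range m).image e with hB
  refine ⟨B, ?_, ?_⟩
  · rw [hB, Finset.card_image_of_injective _ hemono.injective, Finset.card_range]
  · have sidon : ∀ u v : Fin k → ℕ, (∀ j, u j ∈ B) → (∀ j, v j ∈ B) →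
        SS Λ k u = SS Λ k v → ∃ π : Fin k → Fin k, v = u ∘ π := by
      intro u v hu hv hSS
      have hu' : ∀ j, ∃ i, i < m ∧ e i = u j := by
        intro j
        obtain ⟨i, hi, hei⟩ := Finset.mem_image.mp (hu j)
        exact ⟨i, Finset.mem_range.mp hi, hei⟩
      have hv' : ∀ j, ∃ i, i < m ∧ e i = v j := by
        intro j
        obtain ⟨i, hi, hei⟩ := Finset.mem_image.mp (hv j)
        exact ⟨i, Finset.mem_range.mp hi, hei⟩
      choose uu huu1 huu2 using hu'
      choose vv hvv1 hvv2 using hv'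
      set c : ℕ → ℕ := fun i => (Finset.univ.filter (fun j : Fin k => uu j = i)).card with hcdef
      set d : ℕ → ℕ := fun i => (Finset.univ.filter (fun j : Fin k => vv j = i)).card with hddef
      have hsumgen : ∀ (xx : Fin k → ℕ), (∀ j, xx j < m) →
          (∑ j, w (xx j)) = ∑ i ∈ Finset.range m,
            ((Finset.univ.filter (fun j : Fin k => xx j = i)).card : ℝ) * w i := by
        intro xx hxx
        rw [← Finset.sum_fiberwise_of_maps_to (fun j _ => Finset.mem_range.mpr (hxx j))
          (fun j => w (xx j))]
        refine Finset.sum_congr rfl fun i hi => ?_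
        rw [Finset.sum_congr rfl (fun j hj => congrArg w (Finset.mem_filter.mp hj).2),
          Finset.sum_const, nsmul_eq_mul]
      have hsumc : SS Λ k u = ∑ i ∈ Finset.range m, (c i : ℝ) * w i := by
        rw [SS, Finset.sum_congr rfl (fun j _ => by rw [← huu2 j] : ∀ j ∈ Finset.univ,
          Λ (u j) = w (uu j))]
        exact hsumgen uu huu1
      have hsumd : SS Λ k v = ∑ i ∈ Finset.range m, (d i : ℝ) * w i := by
        rw [SS, Finset.sum_congr rfl (fun j _ => by rw [← hvv2 j] : ∀ j ∈ Finset.univ,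
          Λ (v j) = w (vv j))]
        exact hsumgen vv hvv1
      have hcard : ∀ (xx : Fin k → ℕ) (i : ℕ),
          (Finset.univ.filter (fun j : Fin k => xx j = i)).card ≤ k := by
        intro xx i
        calc (Finset.univ.filter (fun j : Fin k => xx j = i)).card
            ≤ (Finset.univ : Finset (Fin k)).card := Finset.card_filter_le _ _
          _ = k := by simp
      have hcd := counts_lemma k w hwpos hsup m c d (fun i => hcard uu i) (fun i => hcard vv i)
        (by rw [← hsumc, ← hsumd]; exact hSS)
      have hπ : ∀ j : Fin k, ∃ j' : Fin k, uu j' = vv j := by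
        intro j
        have h1 : 0 < d (vv j) := Finset.card_pos.mpr
          ⟨j, Finset.mem_filter.mpr ⟨Finset.mem_univ j, rfl⟩⟩
        have h2 : 0 < c (vv j) := by rw [hcd (vv j) (hvv1 j)]; exact h1
        obtain ⟨j', hj'⟩ := Finset.card_pos.mp h2
        exact ⟨j', (Finset.mem_filter.mp hj').2⟩
      choose π hπ2 using hπ
      refine ⟨π, funext fun j => ?_⟩
      show v j = u (π j)
      rw [← hvv2 j, ← huu2 (π j), hπ2 j]
    have hPhi : Phi Λ k B (fun _ => 1) = ∑ u ∈ Fintype.piFinset (fun _ : Fin k => B),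
        ∑ v ∈ Fintype.piFinset (fun _ : Fin k => B),
          if SS Λ k u = SS Λ k v then (1:ℝ) else 0 := by
      rw [Phi]
      exact Finset.sum_congr rfl fun u _ => Finset.sum_congr rfl fun v _ => by simp
    rw [hPhi]
    have hinner : ∀ u ∈ Fintype.piFinset (fun _ : Fin k => B),
        (∑ v ∈ Fintype.piFinset (fun _ : Fin k => B),
          if SS Λ k u = SS Λ k v then (1:ℝ) else 0) ≤ (k:ℝ)^k := by
      intro u hu
      rw [Finset.sum_boole]
      have hsub : ((Fintype.piFinset (fun _ : Fin k => B)).filter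
            (fun v => SS Λ k u = SS Λ k v))
          ⊆ (Finset.univ : Finset (Fin k → Fin k)).image (fun π => u ∘ π) := by
        intro v hv
        obtain ⟨hvP, hSS⟩ := Finset.mem_filter.mp hv
        obtain ⟨π, hπ⟩ := sidon u v (Fintype.mem_piFinset.mp hu) (Fintype.mem_piFinset.mp hvP) hSS
        exact Finset.mem_image.mpr ⟨π, Finset.mem_univ π, hπ.symm⟩
      calc (((Fintype.piFinset (fun _ : Fin k => B)).filter
            (fun v => SS Λ k u = SS Λ k v)).card : ℝ)
          ≤ (((Finset.univ : Finset (Fin k → Fin k)).image (fun π => u ∘ π)).card : ℝ) := by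
            exact_mod_cast Finset.card_le_card hsub
        _ ≤ ((Finset.univ : Finset (Fin k → Fin k)).card : ℝ) := by
            exact_mod_cast Finset.card_image_le
        _ = (k:ℝ)^k := by
            rw [Finset.card_univ]
            simp [Fintype.card_fun]
    calc (∑ u ∈ Fintype.piFinset (fun _ : Fin k => B),
        ∑ v ∈ Fintype.piFinset (fun _ : Fin k => B),
          if SS Λ k u = SS Λ k v then (1:ℝ) else 0)
        ≤ ∑ u ∈ Fintype.piFinset (fun _ : Fin k => B), (k:ℝ)^k := Finset.sum_le_sum hinner
      _ = ((Fintype.piFinset (fun _ : Fin k => B)).card : ℝ) * (k:ℝ)^k := by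
          rw [Finset.sum_const, nsmul_eq_mul]
      _ ≤ ((k:ℝ))^k * (m:ℝ)^k := by
          have hcardP : (Fintype.piFinset (fun _ : Fin k => B)).card = m^k := by
            rw [Fintype.card_piFinset]
            rw [hB, Finset.card_image_of_injective _ hemono.injective, Finset.card_range]
            simp
          rw [hcardP, mul_comm]
          push_cast
          exact le_refl _

lemma H_one_le (Λ : ℕ → ℝ) (hmono : StrictMono Λ) (hunb : Tendsto Λ atTop atTop)
    {k : ℕ} (hk : 1 ≤ k)
    (hlim : ∀ (A : Finset ℕ) (a : ℕ → ℂ),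
      Tendsto (dirichletMpR Λ (2 * k) A a) atTop (nhds (dirichletHpNorm Λ (2 * k) A a)))
    (D : ℝ) (hD : 0 < D)
    (hdem : ∀ A B : Finset ℕ, A.card ≤ B.card →
      dirichletHpNorm Λ (2 * k) A (fun _ => 1) ≤ D * dirichletHpNorm Λ (2 * k) B (fun _ => 1))
    (A : Finset ℕ) :
    dirichletHpNorm Λ (2 * (k:ℝ)) A (fun _ => 1) ≤ D * (k:ℝ) * Real.sqrt (A.card) := by
  have hk1 : (1:ℝ) ≤ (k:ℝ) := by exact_mod_cast hk
  obtain ⟨B, hBcard, hBPhi⟩ := exists_good Λ hmono hunb k hk A.card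
  have h1 := hdem A B (le_of_eq hBcard.symm)
  have h2 : dirichletHpNorm Λ (2*(k:ℝ)) B (fun _ => 1) ≤ (k:ℝ) * Real.sqrt (A.card) := by
    have hp := H_pow Λ hk (hlim B (fun _ => 1))
    refine le_of_pow_le_pow_left₀ (n := 2*k) (by omega) (by positivity) ?_
    rw [hp]
    refine hBPhi.trans ?_
    have hs : (Real.sqrt (A.card))^(2*k) = ((A.card:ℝ))^k := by
      rw [mul_comm 2 k, pow_mul']
      rw [Real.sq_sqrt (by positivity : (0:ℝ) ≤ (A.card:ℝ))]
    rw [mul_pow, hs]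
    have hkk : (k:ℝ)^k ≤ (k:ℝ)^(2*k) := by
      apply pow_le_pow_right₀ hk1
      omega
    exact mul_le_mul_of_nonneg_right hkk (by positivity)
  calc dirichletHpNorm Λ (2*(k:ℝ)) A (fun _ => 1)
      ≤ D * dirichletHpNorm Λ (2*(k:ℝ)) B (fun _ => 1) := h1
    _ ≤ D * ((k:ℝ) * Real.sqrt (A.card)) := mul_le_mul_of_nonneg_left h2 hD.le
    _ = D * (k:ℝ) * Real.sqrt (A.card) := by ring

end DirAux

set_option maxHeartbeats 4000000 in
open DirAux in
/-- If the canonical basis `{e^{-λ_n s}}` is democratic in `H_{2k}^λ`, then the `H_{2k}^λ`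
norm of any Dirichlet polynomial lies between the `H_2^λ` norm and a `log(|A|+1)` multiple
of it. -/
theorem democratic_implies_almost_H2 (Λ : ℕ → ℝ) (hmono : StrictMono Λ)
    (hpos : ∀ n, 0 ≤ Λ n) (hunb : Tendsto Λ atTop atTop)
    (k : ℕ) (hk : 1 ≤ k)
    (hlim : ∀ (A : Finset ℕ) (a : ℕ → ℂ),
      Tendsto (dirichletMpR Λ (2 * k) A a) atTop (nhds (dirichletHpNorm Λ (2 * k) A a)))
    (D : ℝ) (hD : 0 < D)
    (hdem : ∀ A B : Finset ℕ, A.card ≤ B.card →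
      dirichletHpNorm Λ (2 * k) A (fun _ => 1) ≤ D * dirichletHpNorm Λ (2 * k) B (fun _ => 1)) :
    ∃ C : ℝ, 0 < C ∧ ∀ (A : Finset ℕ) (a : ℕ → ℂ),
      Real.sqrt (∑ n ∈ A, ‖a n‖ ^ 2) ≤ dirichletHpNorm Λ (2 * k) A a ∧
        dirichletHpNorm Λ (2 * k) A a ≤
          C * Real.log (A.card + 1) * Real.sqrt (∑ n ∈ A, ‖a n‖ ^ 2) := by
  classical
  have hk1 : (1:ℝ) ≤ (k:ℝ) := by exact_mod_cast hk
  have hkpos : (0:ℝ) < (k:ℝ) := by linarith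
  have hlog2 : 0 < Real.log 2 := Real.log_pos (by norm_num)
  set C : ℝ := 5 * D * (k:ℝ) / Real.log 2 with hC
  have hCpos : 0 < C := by
    apply div_pos ?_ hlog2
    positivity
  refine ⟨C, hCpos, fun A a => ?_⟩
  have hDk_nn : (0:ℝ) ≤ D * (k:ℝ) := by positivity
  refine ⟨H_lower Λ hmono hk (hlim A a), ?_⟩
  set S : ℝ := Real.sqrt (∑ n ∈ A, ‖a n‖^2) with hS
  have hSnn : 0 ≤ S := Real.sqrt_nonneg _
  have hsum_nn : (0:ℝ) ≤ ∑ n ∈ A, ‖a n‖^2 :=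
    Finset.sum_nonneg (fun n _ => by positivity)
  have hS2 : S^2 = ∑ n ∈ A, ‖a n‖^2 := Real.sq_sqrt hsum_nn
  have hup : ∀ n ∈ A, ‖a n‖ ≤ S := by
    intro n hn
    have h1 : ‖a n‖^2 ≤ ∑ n ∈ A, ‖a n‖^2 :=
      Finset.single_le_sum (f := fun n => ‖a n‖^2) (fun i _ => by positivity) hn
    calc ‖a n‖ = Real.sqrt (‖a n‖^2) :=
          (Real.sqrt_sq (norm_nonneg _)).symm
      _ ≤ S := Real.sqrt_le_sqrt h1
  by_cases hS0 : S = 0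
  · have h0 : dirichletHpNorm Λ (2*(k:ℝ)) A a
        ≤ 0 * dirichletHpNorm Λ (2*(k:ℝ)) A (fun _ => 1) :=
      H_coef Λ hk le_rfl (fun n hn => by rw [← hS0]; exact hup n hn)
        (hlim A a) (hlim A (fun _ => 1))
    rw [zero_mul] at h0
    refine h0.trans ?_
    have h01 : (0:ℝ) ≤ (A.card:ℝ) := Nat.cast_nonneg _
    have hlognn : 0 ≤ Real.log ((A.card:ℝ) + 1) := Real.log_nonneg (by linarith)
    exact mul_nonneg (mul_nonneg hCpos.le hlognn) hSnn
  · have hSpos : 0 < S := lt_of_le_of_ne hSnn (Ne.symm hS0)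
    have hS2j : ∀ j : ℕ, (0:ℝ) ≤ S / 2^j := fun j => div_nonneg hSnn (by positivity)
    have hS2jpos : ∀ j : ℕ, (0:ℝ) < S / 2^j := fun j => div_pos hSpos (by positivity)
    have hcard1 : 1 ≤ A.card := by
      rcases Finset.eq_empty_or_nonempty A with h | h
      · exfalso; apply hS0; rw [hS, h]; simp
      · exact Finset.card_pos.mpr h
    set n := A.card with hn
    set J : ℕ := Nat.log 2 n + 1 with hJ
    set T : ℕ → Finset ℕ := fun j => A.filter (fun n' => ‖a n'‖ ≤ S / 2^j) with hT
    have hT0 : T 0 = A := by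
      rw [hT]
      refine Finset.filter_true_of_mem fun n' hn' => ?_
      simpa using hup n' hn'
    have hTsub : ∀ j, T (j+1) ⊆ T j := by
      intro j n' hn'
      obtain ⟨h1, h2⟩ := Finset.mem_filter.mp hn'
      refine Finset.mem_filter.mpr ⟨h1, h2.trans ?_⟩
      gcongr
      all_goals first
        | exact hSnn
        | norm_num
        | omega
    have hTA : ∀ j, T j ⊆ A := fun j => Finset.filter_subset _ _
    have hblock : ∀ (E : Finset ℕ) (c : ℝ), 0 ≤ c → (∀ n' ∈ E, ‖a n'‖ ≤ c) →
        dirichletHpNorm Λ (2*(k:ℝ)) E a ≤ c * (D * (k:ℝ) * Real.sqrt (E.card)) := by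
      intro E c hc0 hc
      refine (H_coef Λ hk hc0 hc (hlim E a) (hlim E (fun _ => 1))).trans ?_
      exact mul_le_mul_of_nonneg_left (H_one_le Λ hmono hunb hk hlim D hD hdem E) hc0
    have hsplit : ∀ J', dirichletHpNorm Λ (2*(k:ℝ)) A a
        ≤ (∑ j ∈ Finset.range J', dirichletHpNorm Λ (2*(k:ℝ)) (T j \ T (j+1)) a)
          + dirichletHpNorm Λ (2*(k:ℝ)) (T J') a := by
      intro J'
      induction J' with
      | zero => rw [Finset.sum_range_zero, zero_add, hT0]
      | succ J' ihJ =>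
        refine ihJ.trans ?_
        rw [Finset.sum_range_succ]
        have hU : T J' = (T J' \ T (J'+1)) ∪ T (J'+1) :=
          (Finset.sdiff_union_of_subset (hTsub J')).symm
        have htri := H_union Λ hk
          (Finset.sdiff_disjoint : Disjoint (T J' \ T (J'+1)) (T (J'+1))) a
          (hlim _ a) (hlim _ a) (hlim _ a)
        rw [← hU] at htri
        linarith
    have hj_bound : ∀ j, dirichletHpNorm Λ (2*(k:ℝ)) (T j \ T (j+1)) a
        ≤ 2 * (D * (k:ℝ)) * S := by
      intro j
      set E := T j \ T (j+1) with hE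
      have hcoef : ∀ n' ∈ E, ‖a n'‖ ≤ S / 2^j := fun n' hn' =>
        (Finset.mem_filter.mp (Finset.mem_sdiff.mp hn').1).2
      have hEb := hblock E (S/2^j) (hS2j j) hcoef
      have hlow : ∀ n' ∈ E, S / 2^(j+1) < ‖a n'‖ := by
        intro n' hn'
        obtain ⟨h1, h2⟩ := Finset.mem_sdiff.mp hn'
        have hnA : n' ∈ A := (Finset.mem_filter.mp h1).1
        by_contra hcon
        exact h2 (Finset.mem_filter.mpr ⟨hnA, le_of_not_gt hcon⟩)
      have hcard : (E.card : ℝ) * (S / 2^(j+1))^2 ≤ S^2 := by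
        have h1 : ∀ n' ∈ E, (S / 2^(j+1))^2 ≤ ‖a n'‖^2 := by
          intro n' hn'
          have h2 := hlow n' hn'
          have h3 : (0:ℝ) ≤ S / 2^(j+1) := hS2j (j+1)
          nlinarith
        calc (E.card : ℝ) * (S / 2^(j+1))^2
            ≤ ∑ n' ∈ E, ‖a n'‖^2 := by
              rw [← nsmul_eq_mul]
              exact Finset.card_nsmul_le_sum E _ _ h1
          _ ≤ ∑ n' ∈ A, ‖a n'‖^2 := by
              refine Finset.sum_le_sum_of_subset_of_nonneg ?_ (fun i _ _ => by positivity)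
              exact (Finset.sdiff_subset).trans (hTA j)
          _ = S^2 := hS2.symm
      have hsqrt : Real.sqrt (E.card) ≤ 2^(j+1) := by
        rw [show ((2:ℝ)^(j+1)) = Real.sqrt (((2:ℝ)^(j+1))^2) from
          (Real.sqrt_sq (by positivity)).symm]
        apply Real.sqrt_le_sqrt
        have hq : (0:ℝ) < (S / 2^(j+1))^2 := pow_pos (hS2jpos (j+1)) 2
        have hid : (S/2^(j+1))^2 * ((2:ℝ)^(j+1))^2 = S^2 := by
          field_simp
        nlinarith
      calc dirichletHpNorm Λ (2*(k:ℝ)) E a ≤ (S/2^j) * (D*(k:ℝ)*Real.sqrt (E.card)) := hEb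
        _ ≤ (S/2^j) * (D*(k:ℝ)*2^(j+1)) := by
            refine mul_le_mul_of_nonneg_left ?_ (hS2j j)
            exact mul_le_mul_of_nonneg_left hsqrt hDk_nn
        _ = 2*(D*(k:ℝ))*S := by
            field_simp
            ring
    have htail : dirichletHpNorm Λ (2*(k:ℝ)) (T J) a ≤ (D*(k:ℝ))*S := by
      have hcoef : ∀ n' ∈ T J, ‖a n'‖ ≤ S/2^J := fun n' hn' =>
        (Finset.mem_filter.mp hn').2
      have hEb := hblock (T J) (S/2^J) (hS2j J) hcoef
      have hcard : ((T J).card:ℝ) ≤ (n:ℝ) := by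
        exact_mod_cast Finset.card_le_card (hTA J)
      have hn2J : (n:ℝ) ≤ ((2:ℝ)^J)^2 := by
        have h0 := Nat.lt_pow_succ_log_self (by norm_num : 1 < 2) n
        have h1 : (n:ℝ) < (2:ℝ)^J := by
          rw [hJ]
          exact_mod_cast h0
        have h2 : (1:ℝ) ≤ (2:ℝ)^J := one_le_pow₀ (by norm_num)
        nlinarith
      have hsqrt : Real.sqrt ((T J).card) ≤ 2^J := by
        rw [show ((2:ℝ)^J) = Real.sqrt (((2:ℝ)^J)^2) from
          (Real.sqrt_sq (by positivity)).symm]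
        exact Real.sqrt_le_sqrt (le_trans hcard hn2J)
      calc dirichletHpNorm Λ (2*(k:ℝ)) (T J) a
          ≤ (S/2^J) * (D*(k:ℝ)*Real.sqrt ((T J).card)) := hEb
        _ ≤ (S/2^J) * (D*(k:ℝ)*2^J) := by
            refine mul_le_mul_of_nonneg_left ?_ (hS2j J)
            exact mul_le_mul_of_nonneg_left hsqrt hDk_nn
        _ = (D*(k:ℝ))*S := by
            field_simp
    have hfinal : dirichletHpNorm Λ (2*(k:ℝ)) A a ≤ (2*(J:ℝ)+1) * ((D*(k:ℝ))*S) := by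
      refine (hsplit J).trans ?_
      have hsum_le : ∑ j ∈ Finset.range J, dirichletHpNorm Λ (2*(k:ℝ)) (T j \ T (j+1)) a
          ≤ (J:ℝ) * (2*(D*(k:ℝ))*S) := by
        calc ∑ j ∈ Finset.range J, dirichletHpNorm Λ (2*(k:ℝ)) (T j \ T (j+1)) a
            ≤ ∑ _j ∈ Finset.range J, 2*(D*(k:ℝ))*S :=
              Finset.sum_le_sum (fun j _ => hj_bound j)
          _ = (J:ℝ) * (2*(D*(k:ℝ))*S) := by
              rw [Finset.sum_const, Finset.card_range, nsmul_eq_mul]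
      calc _ ≤ (J:ℝ) * (2*(D*(k:ℝ))*S) + (D*(k:ℝ))*S := add_le_add hsum_le htail
        _ = (2*(J:ℝ)+1) * ((D*(k:ℝ))*S) := by ring
    have hJlog : (2*(J:ℝ)+1) ≤ 5 * Real.log ((n:ℝ)+1) / Real.log 2 := by
      have hlogle : ((Nat.log 2 n : ℝ)) * Real.log 2 ≤ Real.log ((n:ℝ)+1) := by
        rw [← Real.log_pow]
        apply Real.log_le_log (by positivity)
        have h1 : (2:ℕ)^(Nat.log 2 n) ≤ n := Nat.pow_log_le_self 2 (by omega)
        push_cast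
        calc ((2:ℝ))^(Nat.log 2 n) ≤ (n:ℝ) := by exact_mod_cast h1
          _ ≤ (n:ℝ)+1 := by linarith
      have h1 : Real.log 2 ≤ Real.log ((n:ℝ)+1) := by
        apply Real.log_le_log (by norm_num)
        have : (1:ℝ) ≤ (n:ℝ) := by exact_mod_cast hcard1
        linarith
      rw [le_div_iff₀ hlog2]
      have hJc : (J:ℝ) = (Nat.log 2 n : ℝ) + 1 := by rw [hJ]; push_cast; ring
      nlinarith
    calc dirichletHpNorm Λ (2*(k:ℝ)) A a ≤ (2*(J:ℝ)+1) * ((D*(k:ℝ))*S) := hfinal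
      _ ≤ (5 * Real.log ((n:ℝ)+1) / Real.log 2) * ((D*(k:ℝ))*S) := by
          refine mul_le_mul_of_nonneg_right hJlog (mul_nonneg hDk_nn hSnn)
      _ = C * Real.log ((n:ℝ)+1) * S := by rw [hC]; ring

end
end
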